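/- arXiv:1101.5259 — 4 statements merged into one kernel-verified Lean document; each statement's English description precedes it below -/
import Mathlib

section
/- Let U be an open subset of the unit sphere S³ ⊂ ℝ⁴, K ⊆ U a compact set, and v a smooth unit tangent vector field on U. Then there exists ε > 0 such that for every t ∈ (0, ε) the map φ_t^v : x ↦ x + t·v(x) is injective on K and, for every x ∈ K, the restriction of its differential Y ↦ Y + t·D_Y v to the tangent space T_xS³ = x^⊥ is an injective linear map into the tangent space of the sphere of radius √(1+t²) at φ_t^v(x); in particular φ_t^v maps K diffeomorphically onto its image in the sphere of radius √(1+t²). -/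
open MeasureTheory Matrix
open scoped RealInnerProductSpace ENNReal Topology
open Filter

noncomputable section

/-- `ℝ⁴` with its Euclidean structure. -/
abbrev E4 : Type := EuclideanSpace ℝ (Fin 4)

/-- The unit sphere `S³ ⊆ ℝ⁴`. -/
def S3 : Set E4 := {x : E4 | ‖x‖ = 1}

/-- The Riemannian volume on `S³`: the 3-dimensional Hausdorff measure on `ℝ⁴`. -/
def μS : Measure E4 := μH[3]

/-- The Hopf vector field `H(x₁,x₂,x₃,x₄) = (−x₂, x₁, −x₄, x₃)`. -/
def Hopf (x : E4) : E4 := (WithLp.equiv 2 (Fin 4 → ℝ)).symm ![-x 1, x 0, -x 3, x 2]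

/-- The covariant derivative `∇_Y v = D_Y v − ⟨D_Y v, x⟩x` on the sphere, where `D` is the
(ambient) derivative of `v` at `x`. -/
def cov (x : E4) (D : E4 →L[ℝ] E4) (Y : E4) : E4 := D Y - ⟪D Y, x⟫ • x

/-- `e : Fin 3 → E4` is an orthonormal basis of `T_x S³ = x^⊥` (any orthonormal family of
three vectors orthogonal to `x` spans `x^⊥`). -/
def TangentONB (x : E4) (e : Fin 3 → E4) : Prop :=
  Orthonormal ℝ e ∧ ∀ a, ⟪e a, x⟫ = 0

/-- The interior of `K` relative to the sphere `S³`. -/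
def relInt (K : Set E4) : Set E4 :=
  {x ∈ K | ∃ V : Set E4, IsOpen V ∧ x ∈ V ∧ V ∩ S3 ⊆ K}

/-- The boundary `∂K` of `K` relative to the sphere `S³`. -/
def relFrontier (K : Set E4) : Set E4 := closure K \ relInt K

/-- `K ⊆ S³` has smooth boundary: near each boundary point, `K` is a sublevel set of a smooth
function whose differential does not vanish on the tangent spaces of `S³` along the boundary. -/
def HasSmoothBoundary (K : Set E4) : Prop :=
  ∀ x ∈ relFrontier K, ∃ (V : Set E4) (f : E4 → ℝ), IsOpen V ∧ x ∈ V ∧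
    ContDiffOn ℝ (⊤ : ℕ∞) f V ∧ (∀ y ∈ V ∩ S3, (y ∈ K ↔ f y ≤ 0)) ∧
    ∀ y ∈ V ∩ relFrontier K, ∃ Y : E4, ⟪Y, y⟫ = 0 ∧ fderiv ℝ f y Y ≠ 0

lemma mem_tangentCone_sphere {V : Set E4} (hV : IsOpen V) {x : E4} (hxV : x ∈ V)
    (hx1 : ‖x‖ = 1) {Y : E4} (hY : ⟪Y, x⟫ = 0) :
    Y ∈ tangentConeAt ℝ (V ∩ S3) x := by
  set z : ℕ → E4 := fun n => x + ((n : ℝ))⁻¹ • Y with hz_def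
  have hzsq : ∀ n : ℕ, ‖z n‖ ^ 2 = 1 + ((n : ℝ)⁻¹) ^ 2 * ‖Y‖ ^ 2 := by
    intro n
    have hxy : ⟪x, ((n : ℝ))⁻¹ • Y⟫ = 0 := by
      rw [real_inner_smul_right, real_inner_comm, hY, mul_zero]
    rw [hz_def]
    simp only
    rw [norm_add_sq_real, hxy, hx1, norm_smul]
    simp [mul_pow, sq_abs]
  have hz1 : ∀ n : ℕ, 1 ≤ ‖z n‖ := by
    intro n
    nlinarith [hzsq n, norm_nonneg (z n), sq_nonneg ((n : ℝ)⁻¹ * ‖Y‖), sq_nonneg (‖z n‖ - 1)]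
  have hzne : ∀ n : ℕ, ‖z n‖ ≠ 0 := fun n => by linarith [hz1 n]
  set d : ℕ → E4 := fun n => ‖z n‖⁻¹ • z n - x with hd_def
  have hxd : ∀ n, x + d n = ‖z n‖⁻¹ • z n := by
    intro n; rw [hd_def]; module
  have hmemS3 : ∀ n, x + d n ∈ S3 := by
    intro n
    show ‖x + d n‖ = 1
    rw [hxd, norm_smul, norm_inv, norm_norm, inv_mul_cancel₀ (hzne n)]
  have hzx : Tendsto z atTop (𝓝 x) := by
    have h0 : Tendsto (fun n : ℕ => ((n : ℝ))⁻¹ • Y) atTop (𝓝 ((0 : ℝ) • Y)) :=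
      tendsto_inv_atTop_nhds_zero_nat.smul_const Y
    simpa using tendsto_const_nhds.add h0
  have hnz : Tendsto (fun n => ‖z n‖) atTop (𝓝 1) := by
    have := hzx.norm
    rwa [hx1] at this
  have hnzi : Tendsto (fun n => ‖z n‖⁻¹) atTop (𝓝 1) := by
    simpa using hnz.inv₀ one_ne_zero
  have hxdx : Tendsto (fun n => x + d n) atTop (𝓝 x) := by
    have : Tendsto (fun n => ‖z n‖⁻¹ • z n) atTop (𝓝 ((1 : ℝ) • x)) := hnzi.smul hzx
    simp only [one_smul] at this
    simpa [hxd] using this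
  refine mem_tangentConeAt_iff_exists_seq_norm_tendsto_atTop.2 ⟨fun n => (n : ℝ), d, ?_, ?_, ?_⟩
  swap
  · have hV' : ∀ᶠ n in atTop, x + d n ∈ V := hxdx.eventually (hV.eventually_mem hxV)
    filter_upwards [hV'] with n hn
    exact ⟨hn, hmemS3 n⟩
  · simpa [Real.norm_natCast] using tendsto_natCast_atTop_atTop (R := ℝ)
  · -- n • d n → Y
    have key : ∀ n : ℕ, 1 ≤ n →
        (n : ℝ) • d n = ((n : ℝ) * (‖z n‖⁻¹ - 1)) • x + ‖z n‖⁻¹ • Y := by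
      intro n hn
      have hnne : (n : ℝ) ≠ 0 := Nat.cast_ne_zero.mpr (by omega)
      rw [hd_def]
      simp only [hz_def]
      match_scalars
      · ring
      · field_simp
    have ha : Tendsto (fun n : ℕ => (n : ℝ) * (‖z n‖⁻¹ - 1)) atTop (𝓝 0) := by
      apply squeeze_zero_norm' (a := fun n : ℕ => ‖Y‖ ^ 2 * (n : ℝ)⁻¹)
      · filter_upwards [eventually_ge_atTop 1] with n hn
        have hnpos : (0 : ℝ) < n := by exact_mod_cast hn
        have hnne : (n : ℝ) ≠ 0 := ne_of_gt hnpos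
        have h1 : 1 ≤ ‖z n‖ := hz1 n
        have h2 : ‖z n‖ ^ 2 = 1 + ((n : ℝ)⁻¹) ^ 2 * ‖Y‖ ^ 2 := hzsq n
        have hzpos : (0 : ℝ) < ‖z n‖ := by linarith
        have hss : ‖z n‖ * ‖z n‖⁻¹ = 1 := mul_inv_cancel₀ (hzne n)
        have hni : (n : ℝ) * (n : ℝ)⁻¹ = 1 := mul_inv_cancel₀ hnne
        have hinv1 : ‖z n‖⁻¹ ≤ 1 := by
          rw [inv_le_one_iff₀]; right; exact h1
        have hinvpos : (0 : ℝ) < ‖z n‖⁻¹ := inv_pos.mpr hzpos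
        have hinvn : (0 : ℝ) < (n : ℝ)⁻¹ := inv_pos.mpr hnpos
        rw [Real.norm_eq_abs, abs_of_nonpos (by nlinarith), neg_le]
        -- goal : -(‖Y‖^2 * n⁻¹) ≤ n * (‖z n‖⁻¹ - 1)  → after neg_le:  -(n * (...)) ≤ ‖Y‖^2*n⁻¹ ?
        nlinarith [sq_nonneg (‖z n‖ - 1), sq_nonneg ((n:ℝ)⁻¹ * ‖Y‖)]
      · simpa using tendsto_inv_atTop_nhds_zero_nat.const_mul (‖Y‖ ^ 2)
    have hfin : Tendsto (fun n : ℕ => ((n : ℝ) * (‖z n‖⁻¹ - 1)) • x + ‖z n‖⁻¹ • Y)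
        atTop (𝓝 Y) := by
      have := (ha.smul_const x).add (hnzi.smul_const Y)
      simpa using this
    refine hfin.congr' ?_
    filter_upwards [eventually_ge_atTop 1] with n hn
    exact (key n hn).symm


/-- For small `t > 0`, the map `φ_t^v(x) = x + t·v(x)` is injective on the
compact set `K`, its differential `Y ↦ Y + t·D_Y v` is injective on each tangent space
`T_x S³ = x^⊥` and takes values in the tangent space of the sphere of radius `√(1+t²)` at
`φ_t^v(x)`; in particular `φ_t^v` maps `K` diffeomorphically onto its image in that sphere. -/
theorem phi_t_diffeomorphism
    (U K : Set E4) (hU : ∃ V : Set E4, IsOpen V ∧ U = V ∩ S3)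
    (hK : IsCompact K) (hKU : K ⊆ U)
    (v : E4 → E4) (Dv : E4 → E4 →L[ℝ] E4)
    (hv : ContDiffOn ℝ (⊤ : ℕ∞) v U)
    (hDv : ∀ x ∈ U, HasFDerivWithinAt v (Dv x) U x)
    (hv1 : ∀ x ∈ U, ‖v x‖ = 1) (hv2 : ∀ x ∈ U, ⟪v x, x⟫ = 0) :
    ∃ ε > 0, ∀ t : ℝ, 0 < t → t < ε →
      Set.InjOn (fun x => x + t • v x) K ∧
      ∀ x ∈ K,
        ‖x + t • v x‖ = Real.sqrt (1 + t ^ 2) ∧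
        (∀ Y : E4, ⟪Y, x⟫ = 0 → ⟪Y + t • Dv x Y, x + t • v x⟫ = 0) ∧
        (∀ Y : E4, ⟪Y, x⟫ = 0 → Y + t • Dv x Y = 0 → Y = 0) := by
  obtain ⟨V, hVopen, rfl⟩ := hU
  set r : E4 → E4 := fun y => ‖y‖⁻¹ • y with hr_def
  set O : Set E4 := {(0 : E4)}ᶜ ∩ r ⁻¹' V with hO_def
  have hrcont : ContDiffOn ℝ (⊤ : ℕ∞) r {(0 : E4)}ᶜ := by
    intro y hy
    have hy0 : y ≠ 0 := hy
    exact (((contDiffAt_norm ℝ hy0).inv (norm_ne_zero_iff.mpr hy0)).smul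
      contDiffAt_id).contDiffWithinAt
  have hOopen : IsOpen O :=
    (hrcont.continuousOn).isOpen_inter_preimage isOpen_compl_singleton hVopen
  have hOmem : ∀ y, y ∈ O ↔ y ≠ 0 ∧ r y ∈ V := by
    intro y; simp [hO_def, Set.mem_compl_iff]
  have hrmaps : ∀ y ∈ O, r y ∈ V ∩ S3 := by
    intro y hy
    obtain ⟨hy0, hyV⟩ := (hOmem y).mp hy
    exact ⟨hyV, norm_smul_inv_norm (𝕜 := ℝ) hy0⟩
  have hrx : ∀ y : E4, ‖y‖ = 1 → r y = y := by
    intro y h; rw [hr_def]; simp only; rw [h, inv_one, one_smul]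
  have hKO : K ⊆ O := by
    intro x hx
    obtain ⟨hxV, hxS⟩ := hKU hx
    have hx1 : ‖x‖ = 1 := hxS
    have hx0 : x ≠ 0 := by intro h; rw [h, norm_zero] at hx1; norm_num at hx1
    refine (hOmem x).mpr ⟨hx0, ?_⟩
    rw [hrx x hx1]; exact hxV
  set w : E4 → E4 := v ∘ r with hw_def
  have hwsm : ContDiffOn ℝ (⊤ : ℕ∞) w O :=
    hv.comp (hrcont.mono Set.inter_subset_left) (fun y hy => hrmaps y hy)
  have hwv : ∀ y ∈ V ∩ S3, w y = v y := by
    intro y hy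
    rw [hw_def]; simp only [Function.comp_apply]; rw [hrx y hy.2]
  set Dw : E4 → E4 →L[ℝ] E4 := fun y => fderiv ℝ w y with hDw_def
  have hwd : ∀ y ∈ O, HasFDerivAt w (Dw y) y := by
    intro y hy
    exact ((hwsm.differentiableOn (by simp)).differentiableAt (hOopen.mem_nhds hy)).hasFDerivAt
  have hinner1 : ∀ y ∈ O, ⟪w y, w y⟫ = 1 := by
    intro y hy
    rw [real_inner_self_eq_norm_sq]
    have : ‖w y‖ = 1 := hv1 _ (hrmaps y hy)
    rw [this]; norm_num
  have hinner2 : ∀ y ∈ O, ⟪w y, y⟫ = 0 := by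
    intro y hy
    obtain ⟨hy0, _⟩ := (hOmem y).mp hy
    have h := hv2 _ (hrmaps y hy)
    have hwr : w y = v (r y) := rfl
    rw [← hwr, hr_def] at h
    simp only at h
    rw [real_inner_smul_right] at h
    have hyn : ‖y‖⁻¹ ≠ 0 := inv_ne_zero (norm_ne_zero_iff.mpr hy0)
    exact (mul_eq_zero.mp h).resolve_left hyn
  -- derivative identities
  have hDw1 : ∀ x ∈ K, ∀ Y : E4, ⟪Dw x Y, w x⟫ = 0 := by
    intro x hx Y
    have hxO := hKO hx
    have hF : HasFDerivAt (fun y => ⟪w y, w y⟫)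
        ((fderivInnerCLM ℝ (w x, w x)).comp ((Dw x).prod (Dw x))) x :=
      (hwd x hxO).inner ℝ (hwd x hxO)
    have hEq : (fun y => ⟪w y, w y⟫) =ᶠ[𝓝 x] (fun _ => (1 : ℝ)) := by
      filter_upwards [hOopen.mem_nhds hxO] with y hy using hinner1 y hy
    have hconst : HasFDerivAt (fun y => ⟪w y, w y⟫) (0 : E4 →L[ℝ] ℝ) x :=
      (hasFDerivAt_const (1 : ℝ) x).congr_of_eventuallyEq hEq
    have huniq := hF.unique hconst
    have happ := DFunLike.congr_fun huniq Y
    simp only [ContinuousLinearMap.comp_apply, ContinuousLinearMap.prod_apply,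
      fderivInnerCLM_apply, ContinuousLinearMap.zero_apply] at happ
    have hc : (inner ℝ ((Dw x) Y) (w x) : ℝ) = inner ℝ (w x) ((Dw x) Y) := real_inner_comm _ _
    linarith
  have hDw2 : ∀ x ∈ K, ∀ Y : E4, ⟪Dw x Y, x⟫ = -⟪w x, Y⟫ := by
    intro x hx Y
    have hxO := hKO hx
    have hF : HasFDerivAt (fun y => ⟪w y, y⟫)
        ((fderivInnerCLM ℝ (w x, x)).comp ((Dw x).prod (ContinuousLinearMap.id ℝ E4))) x :=
      (hwd x hxO).inner ℝ (hasFDerivAt_id x)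
    have hEq : (fun y => ⟪w y, y⟫) =ᶠ[𝓝 x] (fun _ => (0 : ℝ)) := by
      filter_upwards [hOopen.mem_nhds hxO] with y hy using hinner2 y hy
    have hconst : HasFDerivAt (fun y => ⟪w y, y⟫) (0 : E4 →L[ℝ] ℝ) x :=
      (hasFDerivAt_const (0 : ℝ) x).congr_of_eventuallyEq hEq
    have huniq := hF.unique hconst
    have happ := DFunLike.congr_fun huniq Y
    simp only [ContinuousLinearMap.comp_apply, ContinuousLinearMap.prod_apply,
      fderivInnerCLM_apply, ContinuousLinearMap.zero_apply,
      ContinuousLinearMap.id_apply] at happ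
    linarith
  -- agreement on tangent vectors
  have hagree : ∀ x ∈ K, ∀ Y : E4, ⟪Y, x⟫ = 0 → Dv x Y = Dw x Y := by
    intro x hx Y hY
    have hxU := hKU hx
    have hmem : Y ∈ tangentConeAt ℝ (V ∩ S3) x :=
      mem_tangentCone_sphere hVopen hxU.1 hxU.2 hY
    have h1 : HasFDerivWithinAt v (Dv x) (V ∩ S3) x := hDv x hxU
    have h2 : HasFDerivWithinAt v (Dw x) (V ∩ S3) x :=
      ((hwd x (hKO hx)).hasFDerivWithinAt).congr (fun y hy => (hwv y hy).symm)
        (hwv x hxU).symm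
    exact h1.unique_on h2 hmem
  -- bounds
  obtain ⟨δ, hδpos, hδO⟩ := hK.exists_cthickening_subset_open hOopen hKO
  have hTcomp : IsCompact (Metric.cthickening δ K) := hK.cthickening
  have hfc : ContinuousOn (fun y => Dw y) (Metric.cthickening δ K) :=
    (hwsm.continuousOn_fderiv_of_isOpen hOopen (by simp)).mono hδO
  obtain ⟨M₀, hM₀⟩ := hTcomp.exists_bound_of_continuousOn hfc
  set M := max M₀ 0 with hM_def
  have hM : ∀ y ∈ Metric.cthickening δ K, ‖Dw y‖ ≤ M :=
    fun y hy => (hM₀ y hy).trans (le_max_left _ _)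
  have hMnn : (0 : ℝ) ≤ M := le_max_right _ _
  have hlip : ∀ x ∈ K, ∀ y ∈ Metric.ball x δ, ‖w y - w x‖ ≤ M * ‖y - x‖ := by
    intro x hx y hy
    have hball : Metric.ball x δ ⊆ Metric.cthickening δ K := by
      intro z hz
      exact Metric.mem_cthickening_of_dist_le z x δ K hx (le_of_lt hz)
    have hballO : Metric.ball x δ ⊆ O := hball.trans hδO
    exact (convex_ball x δ).norm_image_sub_le_of_norm_hasFDerivWithin_le
      (fun z hz => (hwd z (hballO hz)).hasFDerivWithinAt)
      (fun z hz => hM z (hball hz)) (Metric.mem_ball_self hδpos) hy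
  refine ⟨min (δ / 2) (1 / (M + 1)), by positivity, ?_⟩
  intro t ht htε
  have ht1 : t < δ / 2 := lt_of_lt_of_le htε (min_le_left _ _)
  have ht2 : t * M < 1 := by
    have h := lt_of_lt_of_le htε (min_le_right _ _)
    have hM1 : (0 : ℝ) < M + 1 := by linarith
    rw [lt_div_iff₀ hM1] at h
    nlinarith
  constructor
  · -- injectivity
    intro x hx y hy heq
    simp only at heq
    have hxU := hKU hx; have hyU := hKU hy
    have hsub : x - y = t • v y - t • v x := by
      rw [sub_eq_sub_iff_add_eq_add, heq]; abel
    have hub : ‖x - y‖ ≤ 2 * t := by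
      rw [hsub]
      calc ‖t • v y - t • v x‖ ≤ ‖t • v y‖ + ‖t • v x‖ := norm_sub_le _ _
        _ = 2 * t := by
            rw [norm_smul, norm_smul, hv1 y hyU, hv1 x hxU, Real.norm_eq_abs,
              abs_of_pos ht]; ring
    have hyball : y ∈ Metric.ball x δ := by
      rw [Metric.mem_ball, dist_eq_norm, ← norm_sub_rev]
      calc ‖x - y‖ ≤ 2 * t := hub
        _ < δ := by linarith
    have hvlip : ‖v y - v x‖ ≤ M * ‖x - y‖ := by
      have h := hlip x hx y hyball
      rw [hwv y hyU, hwv x hxU, norm_sub_rev y x] at h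
      exact h
    by_contra hne
    have hpos : 0 < ‖x - y‖ := by
      rw [norm_pos_iff, sub_ne_zero]; exact hne
    have hle : ‖x - y‖ ≤ t * (M * ‖x - y‖) := by
      calc ‖x - y‖ = ‖t • v y - t • v x‖ := by rw [hsub]
        _ = t * ‖v y - v x‖ := by
            rw [← smul_sub, norm_smul, Real.norm_eq_abs, abs_of_pos ht]
        _ ≤ t * (M * ‖x - y‖) := by
            apply mul_le_mul_of_nonneg_left hvlip (le_of_lt ht)
    nlinarith
  · intro x hx
    have hxU := hKU hx
    have hx1 : ‖x‖ = 1 := hxU.2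
    refine ⟨?_, ?_, ?_⟩
    · have hsq : ‖x + t • v x‖ ^ 2 = 1 + t ^ 2 := by
        rw [norm_add_sq_real, hx1, norm_smul, real_inner_smul_right, real_inner_comm,
          hv2 x hxU, hv1 x hxU, Real.norm_eq_abs]
        rw [mul_pow, sq_abs]
        ring
      rw [← hsq, Real.sqrt_sq (norm_nonneg _)]
    · intro Y hY
      rw [hagree x hx Y hY]
      have e1 : ⟪Dw x Y, v x⟫ = 0 := by
        have h := hDw1 x hx Y; rwa [hwv x hxU] at h
      have e2 : ⟪Dw x Y, x⟫ = -⟪v x, Y⟫ := by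
        have h := hDw2 x hx Y; rwa [hwv x hxU] at h
      rw [inner_add_left, inner_add_right, inner_add_right, real_inner_smul_left,
        real_inner_smul_left, real_inner_smul_right, real_inner_smul_right, hY, e1, e2,
        real_inner_comm Y (v x)]
      ring
    · intro Y hY hker
      have hD := hagree x hx Y hY
      have hYe : Y = -(t • Dw x Y) := by
        rw [← hD]
        exact eq_neg_of_add_eq_zero_left hker
      have hxT : x ∈ Metric.cthickening δ K := Metric.self_subset_cthickening K hx
      have hnorm : ‖Y‖ ≤ t * (M * ‖Y‖) := by
        calc ‖Y‖ = ‖t • Dw x Y‖ := by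
              conv_lhs => rw [hYe]
              exact norm_neg _
          _ = t * ‖Dw x Y‖ := by rw [norm_smul, Real.norm_eq_abs, abs_of_pos ht]
          _ ≤ t * (M * ‖Y‖) := by
              have h1 : ‖Dw x Y‖ ≤ ‖Dw x‖ * ‖Y‖ := (Dw x).le_opNorm Y
              have h2 : ‖Dw x‖ ≤ M := hM x hxT
              have h3 : ‖Dw x‖ * ‖Y‖ ≤ M * ‖Y‖ :=
                mul_le_mul_of_nonneg_right h2 (norm_nonneg Y)
              exact mul_le_mul_of_nonneg_left (h1.trans h3) (le_of_lt ht)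
      by_contra hne
      have hpos : 0 < ‖Y‖ := norm_pos_iff.mpr hne
      nlinarith
end
end

section
/- Let U be an open subset of the unit sphere S³ ⊂ ℝ⁴, v a smooth unit tangent vector field on U, t > 0, and x ∈ U. Let e₁, e₂ be orthonormal vectors spanning the orthogonal complement of span{x, v(x)} in ℝ⁴, so that {e₁, e₂, v(x)} is an orthonormal basis of T_xS³ = x^⊥, and let u = (v(x) − t·x)/√(1+t²), so that {e₁, e₂, u} is an orthonormal basis of the tangent space at φ_t^v(x) = x + t·v(x) to the sphere of radius √(1+t²). Then the 3×3 matrix M with entries M_ab = ⟨f_a + t·D_{f_a} v, g_b⟩, where (f₁,f₂,f₃) = (e₁,e₂,v(x)) and (g₁,g₂,g₃) = (e₁,e₂,u), satisfies det M = √(1+t²)·(1 + σ₁(v)(x)·t + σ₂(v)(x)·t²). -/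
open MeasureTheory Matrix
open scoped RealInnerProductSpace ENNReal

noncomputable section

section JacobianAux

open Filter Real
open scoped Topology

private lemma jac_inv_nat_tendsto : Filter.Tendsto (fun n : ℕ => (n:ℝ)⁻¹) atTop (𝓝[≠] (0:ℝ)) := by
  rw [tendsto_nhdsWithin_iff]
  refine ⟨tendsto_inv_atTop_nhds_zero_nat, ?_⟩
  filter_upwards [eventually_gt_atTop 0] with n hn
  simp [Set.mem_compl_iff, hn.ne']

private lemma jac_slope_sin : Tendsto (fun n : ℕ => (n:ℝ) * Real.sin (n:ℝ)⁻¹) atTop (𝓝 1) := by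
  have h := (Real.hasDerivAt_sin 0)
  rw [hasDerivAt_iff_tendsto_slope] at h
  have h2 := h.comp jac_inv_nat_tendsto
  simp only [Real.cos_zero] at h2
  exact h2.congr fun n => by simp [slope, div_eq_inv_mul]

private lemma jac_slope_cos : Tendsto (fun n : ℕ => (n:ℝ) * (Real.cos (n:ℝ)⁻¹ - 1)) atTop (𝓝 0) := by
  have h := (Real.hasDerivAt_cos 0)
  rw [hasDerivAt_iff_tendsto_slope] at h
  have h2 := h.comp jac_inv_nat_tendsto
  simp only [Real.sin_zero, neg_zero] at h2
  exact h2.congr fun n => by simp [slope, div_eq_inv_mul]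

private lemma jac_mem_tc {E : Type*} [NormedAddCommGroup E] [InnerProductSpace ℝ E]
    (V : Set E) (hV : IsOpen V) (x : E) (hxV : x ∈ V) (hx : ‖x‖ = 1)
    (Y : E) (hY : ‖Y‖ = 1) (hYx : ⟪Y, x⟫ = 0) :
    Y ∈ tangentConeAt ℝ (V ∩ {y : E | ‖y‖ = 1}) x := by
  refine mem_tangentConeAt_of_seq (atTop : Filter ℕ) (fun n : ℕ => (n:ℝ)) (fun n => (Real.cos (n:ℝ)⁻¹ - 1) • x + Real.sin (n:ℝ)⁻¹ • Y) ?_ ?_ ?_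
  swap
  · have hxd : ∀ n : ℕ, x + ((Real.cos (n:ℝ)⁻¹ - 1) • x + Real.sin (n:ℝ)⁻¹ • Y)
        = Real.cos (n:ℝ)⁻¹ • x + Real.sin (n:ℝ)⁻¹ • Y := by
      intro n; module
    have hsph : ∀ n : ℕ, (Real.cos (n:ℝ)⁻¹ • x + Real.sin (n:ℝ)⁻¹ • Y) ∈ {y : E | ‖y‖ = 1} := by
      intro n
      set a := Real.cos (n:ℝ)⁻¹; set b := Real.sin (n:ℝ)⁻¹
      have hxx : ⟪x, x⟫ = 1 := by
        rw [real_inner_self_eq_norm_sq, hx]; norm_num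
      have hYY : ⟪Y, Y⟫ = 1 := by
        rw [real_inner_self_eq_norm_sq, hY]; norm_num
      have hxY : ⟪x, Y⟫ = 0 := by rw [real_inner_comm]; exact hYx
      have hnsq : ‖a • x + b • Y‖ ^ 2 = 1 := by
        rw [← real_inner_self_eq_norm_sq]
        simp only [inner_add_left, inner_add_right, real_inner_smul_left, real_inner_smul_right,
          hxx, hYY, hxY, hYx]
        have := Real.sin_sq_add_cos_sq (n:ℝ)⁻¹
        nlinarith
      calc ‖a • x + b • Y‖ = Real.sqrt (‖a • x + b • Y‖ ^ 2) := (Real.sqrt_sq (norm_nonneg _)).symm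
        _ = 1 := by rw [hnsq, Real.sqrt_one]
    have hd0 : Tendsto (fun n : ℕ => x + ((Real.cos (n:ℝ)⁻¹ - 1) • x + Real.sin (n:ℝ)⁻¹ • Y))
        atTop (𝓝 x) := by
      have hc : Tendsto (fun n : ℕ => Real.cos (n:ℝ)⁻¹) atTop (𝓝 1) := by
        have := (Real.continuous_cos.tendsto 0).comp tendsto_inv_atTop_nhds_zero_nat
        simpa [Function.comp_def] using this
      have hs : Tendsto (fun n : ℕ => Real.sin (n:ℝ)⁻¹) atTop (𝓝 0) := by
        have := (Real.continuous_sin.tendsto 0).comp tendsto_inv_atTop_nhds_zero_nat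
        simpa [Function.comp_def] using this
      have h1 : Tendsto (fun n : ℕ => (Real.cos (n:ℝ)⁻¹ - 1) • x + Real.sin (n:ℝ)⁻¹ • Y)
          atTop (𝓝 (((1:ℝ)-1) • x + (0:ℝ) • Y)) :=
        ((hc.sub (tendsto_const_nhds (x := (1:ℝ)))).smul_const x).add (hs.smul_const Y)
      have h2 := (tendsto_const_nhds (x := x) (f := atTop (α := ℕ))).add h1
      simpa using h2
    filter_upwards [hd0.eventually (hV.mem_nhds hxV)] with n hn
    exact ⟨hn, by rw [hxd n]; exact hsph n⟩
  · have hc : Tendsto (fun n : ℕ => Real.cos (n:ℝ)⁻¹) atTop (𝓝 1) := by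
      simpa [Function.comp_def] using (Real.continuous_cos.tendsto 0).comp tendsto_inv_atTop_nhds_zero_nat
    have hs : Tendsto (fun n : ℕ => Real.sin (n:ℝ)⁻¹) atTop (𝓝 0) := by
      simpa [Function.comp_def] using (Real.continuous_sin.tendsto 0).comp tendsto_inv_atTop_nhds_zero_nat
    simpa using ((hc.sub (tendsto_const_nhds (x := (1:ℝ)))).smul_const x).add (hs.smul_const Y)
  · have := ((jac_slope_cos.smul_const x).add (jac_slope_sin.smul_const Y))
    simp only [zero_smul, one_smul, zero_add] at this
    refine this.congr fun n => ?_
    simp [smul_add, smul_smul]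

end JacobianAux

/-- The Jacobian determinant of `φ_t^v` in the adapted frames
`(e₁, e₂, v(x))` of `T_x S³` and `(e₁, e₂, u)` (with `u = (v(x) − t·x)/√(1+t²)`) of the
tangent space to the sphere of radius `√(1+t²)` at `φ_t^v(x)` equals
`√(1+t²)·(1 + σ₁(v)(x)·t + σ₂(v)(x)·t²)`. -/
theorem jacobian_determinant
    (U : Set E4) (hU : ∃ V : Set E4, IsOpen V ∧ U = V ∩ S3)
    (v : E4 → E4) (Dv : E4 → E4 →L[ℝ] E4)
    (hv : ContDiffOn ℝ (⊤ : ℕ∞) v U)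
    (hDv : ∀ x ∈ U, HasFDerivWithinAt v (Dv x) U x)
    (hv1 : ∀ x ∈ U, ‖v x‖ = 1) (hv2 : ∀ x ∈ U, ⟪v x, x⟫ = 0)
    (t : ℝ) (ht : 0 < t) (x : E4) (hx : x ∈ U)
    (e₁ e₂ : E4) (he₁ : ‖e₁‖ = 1) (he₂ : ‖e₂‖ = 1) (he₁₂ : ⟪e₁, e₂⟫ = 0)
    (he₁x : ⟪e₁, x⟫ = 0) (he₂x : ⟪e₂, x⟫ = 0)
    (he₁v : ⟪e₁, v x⟫ = 0) (he₂v : ⟪e₂, v x⟫ = 0) :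
    Matrix.det (Matrix.of fun a b : Fin 3 =>
        ⟪![e₁, e₂, v x] a + t • Dv x (![e₁, e₂, v x] a),
          ![e₁, e₂, (Real.sqrt (1 + t ^ 2))⁻¹ • (v x - t • x)] b⟫) =
      Real.sqrt (1 + t ^ 2) *
        (1 + (⟪cov x (Dv x) e₁, e₁⟫ + ⟪cov x (Dv x) e₂, e₂⟫) * t +
          (⟪cov x (Dv x) e₁, e₁⟫ * ⟪cov x (Dv x) e₂, e₂⟫ -
            ⟪cov x (Dv x) e₁, e₂⟫ * ⟪cov x (Dv x) e₂, e₁⟫) * t ^ 2) := by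
  obtain ⟨V, hVo, hUeq⟩ := hU
  have hxV : x ∈ V := by rw [hUeq] at hx; exact hx.1
  have hxS : ‖x‖ = 1 := by rw [hUeq] at hx; exact hx.2
  have htc : ∀ Y : E4, ‖Y‖ = 1 → ⟪Y, x⟫ = 0 → Y ∈ tangentConeAt ℝ U x := by
    intro Y h1 h2
    rw [hUeq]
    exact jac_mem_tc V hVo x hxV hxS Y h1 h2
  have hD := hDv x hx
  have key : ∀ Y ∈ tangentConeAt ℝ U x, ⟪Dv x Y, v x⟫ = 0 ∧ ⟪Dv x Y, x⟫ = -⟪v x, Y⟫ := by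
    intro Y hY
    constructor
    · have hf : HasFDerivWithinAt (fun y => ⟪v y, v y⟫)
          ((fderivInnerCLM ℝ (v x, v x)).comp ((Dv x).prod (Dv x))) U x :=
        HasFDerivWithinAt.inner ℝ hD hD
      have hg : HasFDerivWithinAt (fun y => ⟪v y, v y⟫) (0 : E4 →L[ℝ] ℝ) U x := by
        refine (hasFDerivWithinAt_const (1:ℝ) x U).congr (fun y hy => ?_) ?_
        · rw [real_inner_self_eq_norm_sq, hv1 y hy]; norm_num
        · rw [real_inner_self_eq_norm_sq, hv1 x hx]; norm_num
      have h := hf.unique_on hg hY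
      simp only [ContinuousLinearMap.comp_apply, ContinuousLinearMap.prod_apply,
        fderivInnerCLM_apply, ContinuousLinearMap.zero_apply] at h
      rw [real_inner_comm]
      have hcomm := real_inner_comm (v x) ((Dv x) Y)
      linarith
    · have hf : HasFDerivWithinAt (fun y => ⟪v y, y⟫)
          ((fderivInnerCLM ℝ (v x, x)).comp ((Dv x).prod (ContinuousLinearMap.id ℝ E4))) U x :=
        HasFDerivWithinAt.inner ℝ hD (hasFDerivWithinAt_id x U)
      have hg : HasFDerivWithinAt (fun y => ⟪v y, y⟫) (0 : E4 →L[ℝ] ℝ) U x := by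
        exact (hasFDerivWithinAt_const (0:ℝ) x U).congr (fun y hy => hv2 y hy) (hv2 x hx)
      have h := hf.unique_on hg hY
      simp only [ContinuousLinearMap.comp_apply, ContinuousLinearMap.prod_apply,
        fderivInnerCLM_apply, ContinuousLinearMap.zero_apply,
        ContinuousLinearMap.id_apply] at h
      linarith
  have hvx : ⟪v x, x⟫ = 0 := hv2 x hx
  have hvv : ⟪v x, v x⟫ = 1 := by
    rw [real_inner_self_eq_norm_sq, hv1 x hx]; norm_num
  have i11 : ⟪e₁, e₁⟫ = 1 := by rw [real_inner_self_eq_norm_sq, he₁]; norm_num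
  have i22 : ⟪e₂, e₂⟫ = 1 := by rw [real_inner_self_eq_norm_sq, he₂]; norm_num
  have i21 : ⟪e₂, e₁⟫ = 0 := by rw [real_inner_comm]; exact he₁₂
  have iv1 : ⟪v x, e₁⟫ = 0 := by rw [real_inner_comm]; exact he₁v
  have iv2 : ⟪v x, e₂⟫ = 0 := by rw [real_inner_comm]; exact he₂v
  have ix1 : ⟪x, e₁⟫ = 0 := by rw [real_inner_comm]; exact he₁x
  have ix2 : ⟪x, e₂⟫ = 0 := by rw [real_inner_comm]; exact he₂x
  have k1 := key e₁ (htc e₁ he₁ he₁x)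
  have k2 := key e₂ (htc e₂ he₂ he₂x)
  have k3 := key (v x) (htc (v x) (hv1 x hx) hvx)
  have hA1 : ⟪Dv x e₁, v x⟫ = 0 := k1.1
  have hA2 : ⟪Dv x e₂, v x⟫ = 0 := k2.1
  have hA3 : ⟪Dv x (v x), v x⟫ = 0 := k3.1
  have hB1 : ⟪Dv x e₁, x⟫ = 0 := by rw [k1.2, iv1, neg_zero]
  have hB2 : ⟪Dv x e₂, x⟫ = 0 := by rw [k2.2, iv2, neg_zero]
  have hB3 : ⟪Dv x (v x), x⟫ = -1 := by rw [k3.2, hvv]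
  have hs0 : Real.sqrt (1 + t ^ 2) ≠ 0 := by positivity
  have hs2 : Real.sqrt (1 + t ^ 2) ^ 2 = 1 + t ^ 2 := Real.sq_sqrt (by positivity)
  rw [Matrix.det_fin_three]
  simp only [Matrix.of_apply, Matrix.cons_val', Matrix.cons_val_zero, Matrix.cons_val_one,
    Matrix.head_cons, Matrix.empty_val', Matrix.cons_val_fin_one, Matrix.head_fin_const,
    Matrix.cons_val_two, Matrix.tail_cons, cov,
    inner_add_left, inner_sub_left, inner_sub_right, real_inner_smul_left, real_inner_smul_right,
    hvv, hvx, i11, i22, i21, iv1, iv2, ix1, ix2, he₁₂, he₁x, he₂x, he₁v, he₂v,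
    hA1, hA2, hA3, hB1, hB2, hB3]
  field_simp
  linear_combination (-1 - (⟪(Dv x) e₁, e₁⟫ + ⟪(Dv x) e₂, e₂⟫) * t -
      (⟪(Dv x) e₁, e₁⟫ * ⟪(Dv x) e₂, e₂⟫ -
        ⟪(Dv x) e₁, e₂⟫ * ⟪(Dv x) e₂, e₁⟫) * t ^ 2) * hs2
end
end

section
/- For the Hopf vector field H(x₁,x₂,x₃,x₄) = (−x₂, x₁, −x₄, x₃) on the unit sphere S³ ⊂ ℝ⁴, one has σ₁(H)(x) = 0 and σ₂(H)(x) = 1 for every x ∈ S³. Explicitly: for every x ∈ S³ and every orthonormal pair e₁, e₂ spanning the orthogonal complement of span{x, H(x)} in ℝ⁴, the quantities h_ij = ⟨∇_{e_i}H, e_j⟩ satisfy h₁₁ + h₂₂ = 0 and h₁₁h₂₂ − h₁₂h₂₁ = 1. -/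
open MeasureTheory Matrix
open scoped RealInnerProductSpace ENNReal

noncomputable section

lemma hopf_skew (u v : E4) : ⟪Hopf u, v⟫ = -⟪u, Hopf v⟫ := by
  simp [Hopf, PiLp.inner_apply, Fin.sum_univ_four, WithLp.equiv_symm_apply, PiLp.toLp_apply]
  ring

lemma hopf_isom (u v : E4) : ⟪Hopf u, Hopf v⟫ = ⟪u, v⟫ := by
  simp [Hopf, PiLp.inner_apply, Fin.sum_univ_four, WithLp.equiv_symm_apply, PiLp.toLp_apply]
  ring

lemma hopf_self (u : E4) : ⟪Hopf u, u⟫ = 0 := by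
  have h1 := hopf_skew u u
  have h2 : ⟪u, Hopf u⟫ = ⟪Hopf u, u⟫ := real_inner_comm _ _
  rw [h2] at h1; linarith

/-- For the Hopf vector field `H` one has `σ₁(H) = 0` and `σ₂(H) = 1` at
every point of `S³`: for any orthonormal pair `e₁, e₂` spanning the orthogonal complement of
`span{x, H(x)}`, the quantities `h_ij = ⟨∇_{e_i}H, e_j⟩` (where `D_Y H = H(Y)` since `H` is
linear, and `∇_Y H = D_Y H − ⟨D_Y H, x⟩x`) satisfy `h₁₁ + h₂₂ = 0` and
`h₁₁h₂₂ − h₁₂h₂₁ = 1`. -/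
theorem hopf_sigma_one_and_two
    (x : E4) (hx : x ∈ S3)
    (e₁ e₂ : E4) (he₁ : ‖e₁‖ = 1) (he₂ : ‖e₂‖ = 1) (he₁₂ : ⟪e₁, e₂⟫ = 0)
    (he₁x : ⟪e₁, x⟫ = 0) (he₂x : ⟪e₂, x⟫ = 0)
    (he₁H : ⟪e₁, Hopf x⟫ = 0) (he₂H : ⟪e₂, Hopf x⟫ = 0) :
    ⟪Hopf e₁ - ⟪Hopf e₁, x⟫ • x, e₁⟫ + ⟪Hopf e₂ - ⟪Hopf e₂, x⟫ • x, e₂⟫ = 0 ∧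
    ⟪Hopf e₁ - ⟪Hopf e₁, x⟫ • x, e₁⟫ * ⟪Hopf e₂ - ⟪Hopf e₂, x⟫ • x, e₂⟫ -
      ⟪Hopf e₁ - ⟪Hopf e₁, x⟫ • x, e₂⟫ * ⟪Hopf e₂ - ⟪Hopf e₂, x⟫ • x, e₁⟫ = 1 := by
  have hxn : ‖x‖ = 1 := hx
  have hxx : ⟪x, x⟫ = 1 := by rw [real_inner_self_eq_norm_sq, hxn]; norm_num
  have hxe₁ : ⟪x, e₁⟫ = 0 := by rw [real_inner_comm]; exact he₁x
  have hxe₂ : ⟪x, e₂⟫ = 0 := by rw [real_inner_comm]; exact he₂x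
  have hxH : ⟪x, Hopf x⟫ = 0 := by rw [real_inner_comm]; exact hopf_self x
  have hHH : ⟪Hopf x, Hopf x⟫ = 1 := by rw [hopf_isom]; exact hxx
  have hHe₁ : ⟪Hopf x, e₁⟫ = 0 := by rw [real_inner_comm]; exact he₁H
  have hHe₂ : ⟪Hopf x, e₂⟫ = 0 := by rw [real_inner_comm]; exact he₂H
  have he₁e₁ : ⟪e₁, e₁⟫ = 1 := by rw [real_inner_self_eq_norm_sq, he₁]; norm_num
  have he₂e₂ : ⟪e₂, e₂⟫ = 1 := by rw [real_inner_self_eq_norm_sq, he₂]; norm_num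
  have he₂e₁ : ⟪e₂, e₁⟫ = 0 := by rw [real_inner_comm]; exact he₁₂
  have key : ⟪Hopf e₁, e₂⟫ ^ 2 = 1 := by
    set f : Fin 4 → E4 := ![x, Hopf x, e₁, e₂] with hf
    have horth : Orthonormal ℝ f := by
      rw [orthonormal_iff_ite]
      intro i j
      fin_cases i <;> fin_cases j <;>
        first
          | exact hxx | exact hxH | exact hxe₁ | exact hxe₂
          | exact hopf_self x | exact hHH | exact hHe₁ | exact hHe₂
          | exact he₁x | exact he₁H | exact he₁e₁ | exact he₁₂
          | exact he₂x | exact he₂H | exact he₂e₁ | exact he₂e₂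
    have hcard : Fintype.card (Fin 4) = Module.finrank ℝ E4 := by
      simp [finrank_euclideanSpace]
    have hspan : ⊤ ≤ Submodule.span ℝ (Set.range f) :=
      le_of_eq (horth.linearIndependent.span_eq_top_of_card_eq_finrank hcard).symm
    set b := OrthonormalBasis.mk horth hspan with hb
    have hpar := b.sum_inner_mul_inner (Hopf e₁) (Hopf e₁)
    rw [Fin.sum_univ_four] at hpar
    have hb0 : b 0 = x := by rw [hb, OrthonormalBasis.coe_mk]; rfl
    have hb1 : b 1 = Hopf x := by rw [hb, OrthonormalBasis.coe_mk]; rfl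
    have hb2 : b 2 = e₁ := by rw [hb, OrthonormalBasis.coe_mk]; rfl
    have hb3 : b 3 = e₂ := by rw [hb, OrthonormalBasis.coe_mk]; rfl
    have h0 : ⟪Hopf e₁, x⟫ = 0 := by rw [hopf_skew, he₁H, neg_zero]
    have h1 : ⟪Hopf e₁, Hopf x⟫ = 0 := by rw [hopf_isom]; exact he₁x
    have h2 : ⟪Hopf e₁, e₁⟫ = 0 := hopf_self e₁
    have h3 : ⟪Hopf e₁, Hopf e₁⟫ = 1 := by rw [hopf_isom]; exact he₁e₁
    have g0 : ⟪x, Hopf e₁⟫ = 0 := by rw [real_inner_comm]; exact h0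
    have g1 : ⟪Hopf x, Hopf e₁⟫ = 0 := by rw [real_inner_comm]; exact h1
    have g2 : ⟪e₁, Hopf e₁⟫ = 0 := by rw [real_inner_comm]; exact h2
    have g3 : ⟪e₂, Hopf e₁⟫ = ⟪Hopf e₁, e₂⟫ := real_inner_comm _ _
    rw [hb0, hb1, hb2, hb3, h0, h1, h2, h3, g0, g1, g2, g3] at hpar
    linear_combination hpar
  have h0₁ : ⟪Hopf e₁, x⟫ = 0 := by rw [hopf_skew, he₁H, neg_zero]
  have h0₂ : ⟪Hopf e₂, x⟫ = 0 := by rw [hopf_skew, he₂H, neg_zero]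
  have hd₁ : ⟪Hopf e₁, e₁⟫ = 0 := hopf_self e₁
  have hd₂ : ⟪Hopf e₂, e₂⟫ = 0 := hopf_self e₂
  have hsk : ⟪Hopf e₂, e₁⟫ = -⟪Hopf e₁, e₂⟫ := by
    rw [hopf_skew, real_inner_comm]
  simp only [inner_sub_left, real_inner_smul_left, h0₁, h0₂, hd₁, hd₂, hxe₁, hxe₂, hsk]
  constructor
  · ring
  · nlinarith [key]
end
end

section
/- Let U be an open subset of the unit sphere S³ ⊂ ℝ⁴, K ⊆ U a compact set, and v a smooth unit tangent vector field on U. Then the volume of v on K satisfies vol_K(v) ≥ ∫_K (1 + σ₂(v)) dμ. In particular, the pointwise integrand satisfies √(det(I₃ + G(x))) ≥ 1 + σ₂(v)(x) for every x ∈ U. -/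
open MeasureTheory Matrix
open scoped RealInnerProductSpace ENNReal

noncomputable section

section Helpers

open scoped NNReal

lemma circ_mem {x y : E4} (hx1 : ‖x‖ = 1) (hy1 : ‖y‖ = 1) (hxy : ⟪y, x⟫ = 0) (t : ℝ) :
    Real.cos t • x + Real.sin t • y ∈ S3 := by
  have hxy' : ⟪x, y⟫ = 0 := by rw [real_inner_comm]; exact hxy
  have h2 : ‖Real.cos t • x + Real.sin t • y‖ ^ 2 = 1 := by
    rw [norm_add_sq_real, norm_smul, norm_smul, hx1, hy1, real_inner_smul_left,
      real_inner_smul_right, hxy']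
    simp only [Real.norm_eq_abs, mul_one, mul_zero]
    nlinarith [Real.sin_sq_add_cos_sq t, sq_abs (Real.cos t), sq_abs (Real.sin t)]
  have h3 := norm_nonneg (Real.cos t • x + Real.sin t • y)
  have : ‖Real.cos t • x + Real.sin t • y‖ = 1 := by nlinarith
  exact this

/-- curve lemma -/
lemma curve_deriv {O : Set E4} (hO : IsOpen O) {x y : E4} (hx : x ∈ O) (hx1 : ‖x‖ = 1)
    (hy1 : ‖y‖ = 1) (hxy : ⟪y, x⟫ = 0) {F : Type*} [NormedAddCommGroup F] [NormedSpace ℝ F]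
    {f : E4 → F} {D : E4 →L[ℝ] F} (hf : HasFDerivWithinAt f D (O ∩ S3) x) :
    HasDerivAt (fun t : ℝ => f (Real.cos t • x + Real.sin t • y)) (D y) 0 := by
  set c : ℝ → E4 := fun t => Real.cos t • x + Real.sin t • y with hc
  have hc0 : c 0 = x := by simp [hc]
  have hcS : ∀ t, c t ∈ S3 := fun t => circ_mem hx1 hy1 hxy t
  have hccont : Continuous c := by fun_prop
  have hopen : IsOpen (c ⁻¹' O) := hO.preimage hccont
  have h0mem : (0:ℝ) ∈ c ⁻¹' O := by simp [Set.mem_preimage, hc0, hx]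
  have hmaps : Set.MapsTo c (c ⁻¹' O) (O ∩ S3) := fun t ht => ⟨ht, hcS t⟩
  have hcd : HasDerivAt c y 0 := by
    have h1 : HasDerivAt (fun t : ℝ => Real.cos t • x) ((-Real.sin 0) • x) 0 :=
      (Real.hasDerivAt_cos 0).smul_const x
    have h2 : HasDerivAt (fun t : ℝ => Real.sin t • y) ((Real.cos 0) • y) 0 :=
      (Real.hasDerivAt_sin 0).smul_const y
    have := h1.add h2
    simp at this; exact this
  have hf' : HasFDerivWithinAt f D (O ∩ S3) (c 0) := by rwa [hc0]
  have := hf'.comp_hasDerivWithinAt 0 (hcd.hasDerivWithinAt) hmaps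
  exact (this.hasDerivAt (hopen.mem_nhds h0mem))

/-- uniqueness of tangential derivative -/
lemma tangent_deriv_unique {O : Set E4} (hO : IsOpen O) {x y : E4} (hx : x ∈ O) (hx1 : ‖x‖ = 1)
    (hy1 : ‖y‖ = 1) (hxy : ⟪y, x⟫ = 0) {f : E4 → E4} {D₁ D₂ : E4 →L[ℝ] E4}
    (h1 : HasFDerivWithinAt f D₁ (O ∩ S3) x) (h2 : HasFDerivWithinAt f D₂ (O ∩ S3) x) :
    D₁ y = D₂ y :=
  (curve_deriv hO hx hx1 hy1 hxy h1).unique (curve_deriv hO hx hx1 hy1 hxy h2)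

/-- derivative of unit field is orthogonal to field -/
lemma deriv_orthogonal {O : Set E4} (hO : IsOpen O) {x y : E4} (hx : x ∈ O) (hx1 : ‖x‖ = 1)
    (hy1 : ‖y‖ = 1) (hxy : ⟪y, x⟫ = 0) {v : E4 → E4} {D : E4 →L[ℝ] E4}
    (hD : HasFDerivWithinAt v D (O ∩ S3) x) (hv1 : ∀ z ∈ O ∩ S3, ‖v z‖ = 1) :
    ⟪D y, v x⟫ = 0 := by
  set c : ℝ → E4 := fun t => Real.cos t • x + Real.sin t • y with hc
  have hg : HasDerivAt (fun t => v (c t)) (D y) 0 := curve_deriv hO hx hx1 hy1 hxy hD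
  have hF : HasDerivAt (fun t => (⟪v (c t), v (c t)⟫ : ℝ)) (⟪v (c 0), D y⟫ + ⟪D y, v (c 0)⟫) 0 :=
    HasDerivAt.inner ℝ hg hg
  have hc0 : c 0 = x := by simp [hc]
  have hcS : ∀ t, c t ∈ S3 := fun t => circ_mem hx1 hy1 hxy t
  have hccont : Continuous c := by fun_prop
  have hev : (fun t => (⟪v (c t), v (c t)⟫ : ℝ)) =ᶠ[nhds (0:ℝ)] (fun _ => (1:ℝ)) := by
    have : c ⁻¹' O ∈ nhds (0:ℝ) := (hO.preimage hccont).mem_nhds (by simp [Set.mem_preimage, hc0, hx])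
    filter_upwards [this] with t ht
    have : ‖v (c t)‖ = 1 := hv1 _ ⟨ht, hcS t⟩
    rw [real_inner_self_eq_norm_sq, this]; norm_num
  have h0 : HasDerivAt (fun t => (⟪v (c t), v (c t)⟫ : ℝ)) 0 0 :=
    (hasDerivAt_const (0:ℝ) (1:ℝ)).congr_of_eventuallyEq hev
  have huniq := hF.unique h0
  rw [hc0] at huniq
  have hcomm : ⟪v x, D y⟫ = ⟪D y, v x⟫ := real_inner_comm _ _
  linarith [huniq, hcomm]

lemma inner_self_one {a : E4} (ha : ‖a‖ = 1) : ⟪a, a⟫ = 1 := by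
  rw [real_inner_self_eq_norm_mul_norm, ha, mul_one]

lemma orthonormal_pair {x w : E4} (hx : ‖x‖ = 1) (hw : ‖w‖ = 1) (hxw : ⟪w, x⟫ = 0) :
    Orthonormal ℝ ![x, w] := by
  have hxw' : ⟪x, w⟫ = 0 := by rw [real_inner_comm]; exact hxw
  rw [orthonormal_iff_ite]
  intro i j
  fin_cases i <;> fin_cases j
  · exact inner_self_one hx
  · exact hxw'
  · exact hxw
  · exact inner_self_one hw

/-- completing an orthonormal pair -/
lemma exists_compl {x w : E4} (hx : ‖x‖ = 1) (hw : ‖w‖ = 1) (hxw : ⟪w, x⟫ = 0) :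
    ∃ e₁ e₂ : E4, ‖e₁‖ = 1 ∧ ‖e₂‖ = 1 ∧ ⟪e₁, e₂⟫ = 0 ∧ ⟪e₁, x⟫ = 0 ∧ ⟪e₂, x⟫ = 0 ∧
      ⟪e₁, w⟫ = 0 ∧ ⟪e₂, w⟫ = 0 := by
  have hli : LinearIndependent ℝ ![x, w] := (orthonormal_pair hx hw hxw).linearIndependent
  have hrange : Set.range ![x, w] = {x, w} := by
    simp [Matrix.range_cons, Matrix.range_empty, Set.range_unique]
    exact Set.pair_comm w x
  have hspan : Module.finrank ℝ (Submodule.span ℝ ({x, w} : Set E4)) = 2 := by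
    rw [← hrange, finrank_span_eq_card hli]
    simp
  have hWrank : Module.finrank ℝ ((Submodule.span ℝ ({x, w} : Set E4))ᗮ) = 2 := by
    have h := Submodule.finrank_add_finrank_orthogonal
      (K := Submodule.span ℝ ({x, w} : Set E4)) (E := E4)
    rw [hspan, finrank_euclideanSpace_fin] at h
    omega
  let b := (stdOrthonormalBasis ℝ ((Submodule.span ℝ ({x, w} : Set E4))ᗮ)).reindex
    (finCongr hWrank)
  have hmem : ∀ i : Fin 2, ((b i : E4) ∈ (Submodule.span ℝ ({x, w} : Set E4))ᗮ) :=
    fun i => (b i).2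
  have horthx : ∀ i : Fin 2, ⟪(b i : E4), x⟫ = 0 := by
    intro i
    have := (Submodule.mem_orthogonal _ _).1 (hmem i) x (Submodule.subset_span (by simp))
    rwa [real_inner_comm] at this
  have horthw : ∀ i : Fin 2, ⟪(b i : E4), w⟫ = 0 := by
    intro i
    have := (Submodule.mem_orthogonal _ _).1 (hmem i) w (Submodule.subset_span (by simp))
    rwa [real_inner_comm] at this
  refine ⟨(b 0 : E4), (b 1 : E4), ?_, ?_, ?_, horthx 0, horthx 1, horthw 0, horthw 1⟩
  · exact b.orthonormal.1 0
  · exact b.orthonormal.1 1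
  · exact b.orthonormal.2 (by decide : (0 : Fin 2) ≠ 1)

/-- orthonormal basis from an orthonormal 4-family -/
lemma onb_of_family {f : Fin 4 → E4} (hf : Orthonormal ℝ f) :
    ∃ b : OrthonormalBasis (Fin 4) ℝ E4, ⇑b = f := by
  have hcard : Fintype.card (Fin 4) = Module.finrank ℝ E4 := by
    simp [finrank_euclideanSpace_fin]
  let B := basisOfLinearIndependentOfCardEqFinrank hf.linearIndependent hcard
  have hB : ⇑B = f := coe_basisOfLinearIndependentOfCardEqFinrank _ _
  refine ⟨B.toOrthonormalBasis (by rwa [hB]), ?_⟩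
  rw [Module.Basis.coe_toOrthonormalBasis, hB]

/-- orthonormality of a quadruple -/
lemma orthonormal_quad {a b c d : E4} (ha : ‖a‖ = 1) (hb : ‖b‖ = 1) (hc : ‖c‖ = 1)
    (hd : ‖d‖ = 1) (hab : ⟪a, b⟫ = 0) (hac : ⟪a, c⟫ = 0) (had : ⟪a, d⟫ = 0)
    (hbc : ⟪b, c⟫ = 0) (hbd : ⟪b, d⟫ = 0) (hcd : ⟪c, d⟫ = 0) :
    Orthonormal ℝ ![a, b, c, d] := by
  have hba : ⟪b, a⟫ = 0 := by rw [real_inner_comm]; exact hab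
  have hca : ⟪c, a⟫ = 0 := by rw [real_inner_comm]; exact hac
  have hda : ⟪d, a⟫ = 0 := by rw [real_inner_comm]; exact had
  have hcb : ⟪c, b⟫ = 0 := by rw [real_inner_comm]; exact hbc
  have hdb : ⟪d, b⟫ = 0 := by rw [real_inner_comm]; exact hbd
  have hdc : ⟪d, c⟫ = 0 := by rw [real_inner_comm]; exact hcd
  rw [orthonormal_iff_ite]
  intro i j
  fin_cases i <;> fin_cases j
  · exact inner_self_one ha
  · exact hab
  · exact hac
  · exact had
  · exact hba
  · exact inner_self_one hb
  · exact hbc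
  · exact hbd
  · exact hca
  · exact hcb
  · exact inner_self_one hc
  · exact hcd
  · exact hda
  · exact hdb
  · exact hdc
  · exact inner_self_one hd

/-- Parseval coordinates for vectors orthogonal to `b 2`, `b 3`. -/
lemma gram_coords (b : OrthonormalBasis (Fin 4) ℝ E4) (u w : E4)
    (hu3 : ⟪u, b 2⟫ = 0) (hu4 : ⟪u, b 3⟫ = 0) (hw3 : ⟪w, b 2⟫ = 0) (hw4 : ⟪w, b 3⟫ = 0) :
    ⟪u, w⟫ = ⟪u, b 0⟫ * ⟪w, b 0⟫ + ⟪u, b 1⟫ * ⟪w, b 1⟫ := by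
  have := b.sum_inner_mul_inner u w
  rw [Fin.sum_univ_four] at this
  rw [hu3, hu4] at this
  rw [real_inner_comm (b 0) w, real_inner_comm (b 1) w]
  linarith [this]

/-- explicit 3×3 determinant of `1 + (p pᵀ + q qᵀ)` -/
lemma det3_explicit (p q : Fin 3 → ℝ) :
    Matrix.det (1 + Matrix.of fun a b : Fin 3 => p a * p b + q a * q b) =
      (1 + p 0 ^ 2 + p 1 ^ 2 + p 2 ^ 2) * (1 + q 0 ^ 2 + q 1 ^ 2 + q 2 ^ 2) -
        (p 0 * q 0 + p 1 * q 1 + p 2 * q 2) ^ 2 := by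
  rw [Matrix.det_fin_three]
  norm_num [Matrix.add_apply, Matrix.one_apply, Matrix.of_apply, Fin.ext_iff]
  ring

/-- the scalar inequality -/
lemma sqrt_ineq (p q : Fin 3 → ℝ) :
    1 + (p 0 * q 1 - q 0 * p 1) ≤ Real.sqrt
      ((1 + p 0 ^ 2 + p 1 ^ 2 + p 2 ^ 2) * (1 + q 0 ^ 2 + q 1 ^ 2 + q 2 ^ 2) -
        (p 0 * q 0 + p 1 * q 1 + p 2 * q 2) ^ 2) := by
  set σ := p 0 * q 1 - q 0 * p 1 with hσ
  set D := (1 + p 0 ^ 2 + p 1 ^ 2 + p 2 ^ 2) * (1 + q 0 ^ 2 + q 1 ^ 2 + q 2 ^ 2) -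
      (p 0 * q 0 + p 1 * q 1 + p 2 * q 2) ^ 2 with hD
  have key : (1 + σ) ^ 2 ≤ D := by
    rw [hσ, hD]
    nlinarith [sq_nonneg (p 0 - q 1), sq_nonneg (p 1 + q 0),
      sq_nonneg (p 0 * q 2 - p 2 * q 0), sq_nonneg (p 1 * q 2 - p 2 * q 1),
      sq_nonneg (p 2), sq_nonneg (q 2), sq_nonneg (p 0 * q 1 - q 0 * p 1)]
  rcases le_or_gt (1 + σ) 0 with h | h
  · exact h.trans (Real.sqrt_nonneg _)
  · have : 1 + σ = Real.sqrt ((1 + σ) ^ 2) := by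
      rw [Real.sqrt_sq h.le]
    rw [this]
    exact Real.sqrt_le_sqrt key

/-- nonnegativity of the determinant expression (det ≥ 1) -/
lemma det3_ge_one (p q : Fin 3 → ℝ) :
    1 ≤ (1 + p 0 ^ 2 + p 1 ^ 2 + p 2 ^ 2) * (1 + q 0 ^ 2 + q 1 ^ 2 + q 2 ^ 2) -
        (p 0 * q 0 + p 1 * q 1 + p 2 * q 2) ^ 2 := by
  nlinarith [sq_nonneg (p 0 * q 1 - p 1 * q 0), sq_nonneg (p 0 * q 2 - p 2 * q 0),
    sq_nonneg (p 1 * q 2 - p 2 * q 1), sq_nonneg (p 0), sq_nonneg (q 0),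
    sq_nonneg (p 1), sq_nonneg (q 1), sq_nonneg (p 2), sq_nonneg (q 2)]

lemma gram_factor (T : E4 →L[ℝ] E4) (g : OrthonormalBasis (Fin 4) ℝ E4) (f : Fin 4 → E4) :
    (Matrix.of fun i j : Fin 4 => ⟪T (f i), T (f j)⟫) =
      (Matrix.of fun k i : Fin 4 => ⟪g k, T (f i)⟫)ᵀ * (Matrix.of fun k i : Fin 4 => ⟪g k, T (f i)⟫) := by
  ext i j
  simp only [Matrix.mul_apply, Matrix.transpose_apply, Matrix.of_apply]
  rw [← g.sum_inner_mul_inner (T (f i)) (T (f j))]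
  apply Finset.sum_congr rfl
  intro k _
  rw [real_inner_comm (T (f i)) (g k)]

lemma gram_det_basis_indep (T : E4 →L[ℝ] E4) (g b : OrthonormalBasis (Fin 4) ℝ E4) :
    Matrix.det (1 + Matrix.of fun i j : Fin 4 => ⟪T (b i), T (b j)⟫) =
      Matrix.det (1 + Matrix.of fun i j : Fin 4 => ⟪T (g i), T (g j)⟫) := by
  set A := Matrix.of fun k i : Fin 4 => ⟪g k, T (b i)⟫ with hA
  set Bm := Matrix.of fun k i : Fin 4 => ⟪g k, T (g i)⟫ with hBm
  set O := Matrix.of fun k i : Fin 4 => ⟪g k, b i⟫ with hO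
  have h1 : (Matrix.of fun i j : Fin 4 => ⟪T (b i), T (b j)⟫) = Aᵀ * A := gram_factor T g b
  have h2 : (Matrix.of fun i j : Fin 4 => ⟪T (g i), T (g j)⟫) = Bmᵀ * Bm := gram_factor T g g
  have h3 : A = Bm * O := by
    ext k i
    simp only [hA, hBm, hO, Matrix.mul_apply, Matrix.of_apply]
    have hb : (b i : E4) = ∑ m : Fin 4, ⟪g m, b i⟫ • g m := by
      conv_lhs => rw [← g.sum_repr (b i)]
      apply Finset.sum_congr rfl
      intro m _
      rw [g.repr_apply_apply]
    have key : ⟪g k, T (b i)⟫ = ∑ m : Fin 4, ⟪g k, T (g m)⟫ * ⟪g m, b i⟫ := by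
      conv_lhs => rw [hb]
      rw [map_sum, inner_sum]
      apply Finset.sum_congr rfl
      intro m _
      rw [ContinuousLinearMap.map_smul, real_inner_smul_right]
      ring
    exact key
  have h4 : Oᵀ * O = 1 := by
    ext i j
    simp only [hO, Matrix.mul_apply, Matrix.transpose_apply, Matrix.of_apply, Matrix.one_apply]
    have hps := g.sum_inner_mul_inner (b i) (b j)
    have horth := orthonormal_iff_ite.1 b.orthonormal i j
    rw [horth] at hps
    rw [← hps]
    apply Finset.sum_congr rfl
    intro k _
    rw [real_inner_comm (b i) (g k)]
  have hdetO : Matrix.det Oᵀ * Matrix.det O = 1 := by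
    rw [← Matrix.det_mul, h4, Matrix.det_one]
  rw [h1, h2, h3]
  have hexp : (1 : Matrix (Fin 4) (Fin 4) ℝ) + (Bm * O)ᵀ * (Bm * O) =
      Oᵀ * (1 + Bmᵀ * Bm) * O := by
    rw [Matrix.transpose_mul]
    rw [Matrix.mul_add, Matrix.add_mul]
    rw [Matrix.mul_one, h4]
    noncomm_ring
  rw [hexp, Matrix.det_mul, Matrix.det_mul]
  calc Matrix.det Oᵀ * Matrix.det (1 + Bmᵀ * Bm) * Matrix.det O
      = (Matrix.det Oᵀ * Matrix.det O) * Matrix.det (1 + Bmᵀ * Bm) := by ring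
    _ = Matrix.det (1 + Bmᵀ * Bm) := by rw [hdetO, one_mul]

lemma det_border (g : Matrix (Fin 4) (Fin 4) ℝ) (hrow : ∀ i, g i 3 = 0) (hcol : ∀ j, g 3 j = 0) :
    Matrix.det (1 + g) = Matrix.det ((1 : Matrix (Fin 3) (Fin 3) ℝ) +
      Matrix.of fun a b : Fin 3 => g a.castSucc b.castSucc) := by
  have e1 : ∀ a : Fin 3, finSumFinEquiv (Sum.inl a) = Fin.castSucc a := fun a => finSumFinEquiv_apply_left a
  have e2 : finSumFinEquiv (Sum.inr (0 : Fin 1)) = (3 : Fin 4) := by decide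
  have s1 : finSumFinEquiv.symm (3 : Fin 4) = Sum.inr (0 : Fin 1) := by
    rw [← e2, Equiv.symm_apply_apply]
  have s2 : ∀ a : Fin 3, finSumFinEquiv.symm (Fin.castSucc a) = Sum.inl a := by
    intro a
    rw [← e1, Equiv.symm_apply_apply]
  have hval3 : ((3 : Fin 4) : ℕ) = 3 := rfl
  have hmat : (1 + g) = (Matrix.reindex finSumFinEquiv finSumFinEquiv)
      (Matrix.fromBlocks ((1 : Matrix (Fin 3) (Fin 3) ℝ) +
        Matrix.of fun a b : Fin 3 => g a.castSucc b.castSucc) 0 0 (1 : Matrix (Fin 1) (Fin 1) ℝ)) := by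
    ext i j
    obtain ⟨i', rfl⟩ := (finSumFinEquiv (m := 3) (n := 1)).surjective i
    obtain ⟨j', rfl⟩ := (finSumFinEquiv (m := 3) (n := 1)).surjective j
    rcases i' with a | a <;> rcases j' with c | c
    · rw [e1, e1]
      simp [Matrix.reindex_apply, Matrix.submatrix_apply, s2,
        Matrix.fromBlocks_apply₁₁, Matrix.add_apply, Matrix.one_apply, Matrix.of_apply,
        Fin.ext_iff]
    · have hc : c = 0 := Subsingleton.elim _ _
      subst hc
      have h1 := a.isLt
      rw [e1, e2]
      simp [Matrix.reindex_apply, Matrix.submatrix_apply, s1, s2,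
        Matrix.fromBlocks_apply₁₂, Matrix.add_apply, Matrix.one_apply, hrow,
        Fin.ext_iff, hval3]
      omega
    · have ha : a = 0 := Subsingleton.elim _ _
      subst ha
      have h1 := c.isLt
      rw [e1, e2]
      simp [Matrix.reindex_apply, Matrix.submatrix_apply, s1, s2,
        Matrix.fromBlocks_apply₂₁, Matrix.add_apply, Matrix.one_apply, hcol,
        Fin.ext_iff, hval3]
      omega
    · have ha : a = 0 := Subsingleton.elim _ _
      have hc : c = 0 := Subsingleton.elim _ _
      subst ha; subst hc
      rw [e2]
      simp [Matrix.reindex_apply, Matrix.submatrix_apply, s1,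
        Matrix.fromBlocks_apply₂₂, Matrix.add_apply, Matrix.one_apply, hrow]
  rw [hmat, Matrix.det_reindex_self, Matrix.det_fromBlocks_zero₂₁, Matrix.det_one, mul_one]

/-- graph maps covering the sphere -/
def hmap (i : Fin 4) (s : ℝ) (z : Fin 3 → ℝ) : E4 :=
  EuclideanSpace.single i (s * Real.sqrt (1 - (z 0 ^ 2 + z 1 ^ 2 + z 2 ^ 2))) +
    EuclideanSpace.single (i.succAbove 0) (z 0) +
    EuclideanSpace.single (i.succAbove 1) (z 1) +
    EuclideanSpace.single (i.succAbove 2) (z 2)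

def Kc : Set (Fin 3 → ℝ) := {z | z 0 ^ 2 + z 1 ^ 2 + z 2 ^ 2 ≤ 3 / 4}

set_option maxHeartbeats 1000000 in
lemma hmap_lipschitz (i : Fin 4) (s : ℝ) (hs : s = 1 ∨ s = -1) :
    LipschitzOnWith 9 (hmap i s) Kc := by
  have habs : |s| = 1 := by rcases hs with h | h <;> simp [h]
  rw [lipschitzOnWith_iff_dist_le_mul]
  intro z hz w hw
  have hz' : z 0 ^ 2 + z 1 ^ 2 + z 2 ^ 2 ≤ 3 / 4 := hz
  have hw' : w 0 ^ 2 + w 1 ^ 2 + w 2 ^ 2 ≤ 3 / 4 := hw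
  set d := dist z w with hd
  have hdn : 0 ≤ d := dist_nonneg
  have hcoord : ∀ k : Fin 3, |z k - w k| ≤ d := by
    intro k
    have := dist_le_pi_dist z w k
    rwa [Real.dist_eq] at this
  have b0 : |z 0| ≤ 1 := by nlinarith [sq_abs (z 0), sq_nonneg (z 1), sq_nonneg (z 2), abs_nonneg (z 0)]
  have b1 : |z 1| ≤ 1 := by nlinarith [sq_abs (z 1), sq_nonneg (z 0), sq_nonneg (z 2), abs_nonneg (z 1)]
  have b2 : |z 2| ≤ 1 := by nlinarith [sq_abs (z 2), sq_nonneg (z 0), sq_nonneg (z 1), abs_nonneg (z 2)]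
  have c0 : |w 0| ≤ 1 := by nlinarith [sq_abs (w 0), sq_nonneg (w 1), sq_nonneg (w 2), abs_nonneg (w 0)]
  have c1 : |w 1| ≤ 1 := by nlinarith [sq_abs (w 1), sq_nonneg (w 0), sq_nonneg (w 2), abs_nonneg (w 1)]
  have c2 : |w 2| ≤ 1 := by nlinarith [sq_abs (w 2), sq_nonneg (w 0), sq_nonneg (w 1), abs_nonneg (w 2)]
  have hsumdiff : |(z 0 ^ 2 + z 1 ^ 2 + z 2 ^ 2) - (w 0 ^ 2 + w 1 ^ 2 + w 2 ^ 2)| ≤ 6 * d := by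
    have h0 := hcoord 0; have h1 := hcoord 1; have h2 := hcoord 2
    have e : ∀ a b : ℝ, |a| ≤ 1 → |b| ≤ 1 → |a - b| ≤ d → |a ^ 2 - b ^ 2| ≤ 2 * d := by
      intro a b hba hbb hab
      have heq : a ^ 2 - b ^ 2 = (a - b) * (a + b) := by ring
      rw [heq, abs_mul]
      have h2 : |a + b| ≤ 2 := by
        calc |a + b| ≤ |a| + |b| := abs_add_le _ _
          _ ≤ 2 := by linarith
      nlinarith [abs_nonneg (a - b), abs_nonneg (a + b)]
    have e0 := e _ _ b0 c0 h0
    have e1 := e _ _ b1 c1 h1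
    have e2 := e _ _ b2 c2 h2
    have := abs_add_le (z 0 ^ 2 - w 0 ^ 2) (z 1 ^ 2 - w 1 ^ 2)
    have := abs_add_le (z 0 ^ 2 - w 0 ^ 2 + (z 1 ^ 2 - w 1 ^ 2)) (z 2 ^ 2 - w 2 ^ 2)
    have heq : z 0 ^ 2 + z 1 ^ 2 + z 2 ^ 2 - (w 0 ^ 2 + w 1 ^ 2 + w 2 ^ 2) =
        z 0 ^ 2 - w 0 ^ 2 + (z 1 ^ 2 - w 1 ^ 2) + (z 2 ^ 2 - w 2 ^ 2) := by ring
    rw [heq]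
    linarith
  have hsq : |Real.sqrt (1 - (z 0 ^ 2 + z 1 ^ 2 + z 2 ^ 2)) -
      Real.sqrt (1 - (w 0 ^ 2 + w 1 ^ 2 + w 2 ^ 2))| ≤ 6 * d := by
    set a := 1 - (z 0 ^ 2 + z 1 ^ 2 + z 2 ^ 2) with ha
    set b := 1 - (w 0 ^ 2 + w 1 ^ 2 + w 2 ^ 2) with hb
    have ha4 : (1:ℝ)/4 ≤ a := by rw [ha]; linarith
    have hb4 : (1:ℝ)/4 ≤ b := by rw [hb]; linarith
    have hsa : Real.sqrt a ^ 2 = a := Real.sq_sqrt (by linarith)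
    have hsb : Real.sqrt b ^ 2 = b := Real.sq_sqrt (by linarith)
    have hsa2 : (1:ℝ)/2 ≤ Real.sqrt a := by
      have := Real.sqrt_le_sqrt ha4
      rwa [show (1:ℝ)/4 = (1/2)^2 by norm_num, Real.sqrt_sq (by norm_num)] at this
    have hsb2 : (1:ℝ)/2 ≤ Real.sqrt b := by
      have := Real.sqrt_le_sqrt hb4
      rwa [show (1:ℝ)/4 = (1/2)^2 by norm_num, Real.sqrt_sq (by norm_num)] at this
    have hab : |a - b| ≤ 6 * d := by
      have heq : a - b = -((z 0 ^ 2 + z 1 ^ 2 + z 2 ^ 2) - (w 0 ^ 2 + w 1 ^ 2 + w 2 ^ 2)) := by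
        rw [ha, hb]; ring
      rw [heq, abs_neg]
      exact hsumdiff
    have key : |Real.sqrt a - Real.sqrt b| * 1 ≤ |a - b| := by
      have h1 : |Real.sqrt a - Real.sqrt b| * (Real.sqrt a + Real.sqrt b) = |a - b| := by
        rw [← abs_of_nonneg (show (0:ℝ) ≤ Real.sqrt a + Real.sqrt b by linarith), ← abs_mul]
        congr 1
        nlinarith [hsa, hsb]
      nlinarith [abs_nonneg (Real.sqrt a - Real.sqrt b)]
    calc |Real.sqrt a - Real.sqrt b| = |Real.sqrt a - Real.sqrt b| * 1 := by ring
      _ ≤ |a - b| := key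
      _ ≤ 6 * d := hab
  have hdiff : hmap i s z - hmap i s w =
      EuclideanSpace.single i (s * Real.sqrt (1 - (z 0 ^ 2 + z 1 ^ 2 + z 2 ^ 2)) -
        s * Real.sqrt (1 - (w 0 ^ 2 + w 1 ^ 2 + w 2 ^ 2))) +
      EuclideanSpace.single (i.succAbove 0) (z 0 - w 0) +
      EuclideanSpace.single (i.succAbove 1) (z 1 - w 1) +
      EuclideanSpace.single (i.succAbove 2) (z 2 - w 2) := by
    unfold hmap
    ext j
    simp only [PiLp.add_apply, PiLp.sub_apply, EuclideanSpace.single_apply]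
    split_ifs <;> ring
  rw [dist_eq_norm, hdiff]
  have hn1 : ‖EuclideanSpace.single i (s * Real.sqrt (1 - (z 0 ^ 2 + z 1 ^ 2 + z 2 ^ 2)) -
      s * Real.sqrt (1 - (w 0 ^ 2 + w 1 ^ 2 + w 2 ^ 2)))‖ ≤ 6 * d := by
    rw [EuclideanSpace.norm_single]
    have heq : s * Real.sqrt (1 - (z 0 ^ 2 + z 1 ^ 2 + z 2 ^ 2)) -
        s * Real.sqrt (1 - (w 0 ^ 2 + w 1 ^ 2 + w 2 ^ 2)) =
        s * (Real.sqrt (1 - (z 0 ^ 2 + z 1 ^ 2 + z 2 ^ 2)) -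
          Real.sqrt (1 - (w 0 ^ 2 + w 1 ^ 2 + w 2 ^ 2))) := by ring
    rw [Real.norm_eq_abs, heq, abs_mul, habs, one_mul]
    exact hsq
  have hsingle : ∀ (m : Fin 4) (t : ℝ), ‖EuclideanSpace.single m t‖ = |t| := by
    intro m t
    rw [EuclideanSpace.norm_single, Real.norm_eq_abs]
  have h9 : ((9 : ℝ≥0) : ℝ) = 9 := by norm_num
  have hfinal : ‖EuclideanSpace.single i (s * Real.sqrt (1 - (z 0 ^ 2 + z 1 ^ 2 + z 2 ^ 2)) -
        s * Real.sqrt (1 - (w 0 ^ 2 + w 1 ^ 2 + w 2 ^ 2))) +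
      EuclideanSpace.single (i.succAbove 0) (z 0 - w 0) +
      EuclideanSpace.single (i.succAbove 1) (z 1 - w 1) +
      EuclideanSpace.single (i.succAbove 2) (z 2 - w 2)‖ ≤ 9 * d := by
    have t1 := norm_add_le (EuclideanSpace.single i (s * Real.sqrt (1 - (z 0 ^ 2 + z 1 ^ 2 + z 2 ^ 2)) -
        s * Real.sqrt (1 - (w 0 ^ 2 + w 1 ^ 2 + w 2 ^ 2))) +
      EuclideanSpace.single (i.succAbove 0) (z 0 - w 0) +
      EuclideanSpace.single (i.succAbove 1) (z 1 - w 1))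
      (EuclideanSpace.single (i.succAbove 2) (z 2 - w 2))
    have t2 := norm_add_le (EuclideanSpace.single i (s * Real.sqrt (1 - (z 0 ^ 2 + z 1 ^ 2 + z 2 ^ 2)) -
        s * Real.sqrt (1 - (w 0 ^ 2 + w 1 ^ 2 + w 2 ^ 2))) +
      EuclideanSpace.single (i.succAbove 0) (z 0 - w 0))
      (EuclideanSpace.single (i.succAbove 1) (z 1 - w 1))
    have t3 := norm_add_le (EuclideanSpace.single i (s * Real.sqrt (1 - (z 0 ^ 2 + z 1 ^ 2 + z 2 ^ 2)) -
        s * Real.sqrt (1 - (w 0 ^ 2 + w 1 ^ 2 + w 2 ^ 2))))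
      (EuclideanSpace.single (i.succAbove 0) (z 0 - w 0))
    simp only [hsingle] at t1 t2 t3 hn1 ⊢
    have u0 := hcoord 0; have u1 := hcoord 1; have u2 := hcoord 2
    linarith
  calc ‖EuclideanSpace.single i (s * Real.sqrt (1 - (z 0 ^ 2 + z 1 ^ 2 + z 2 ^ 2)) -
        s * Real.sqrt (1 - (w 0 ^ 2 + w 1 ^ 2 + w 2 ^ 2))) +
      EuclideanSpace.single (i.succAbove 0) (z 0 - w 0) +
      EuclideanSpace.single (i.succAbove 1) (z 1 - w 1) +
      EuclideanSpace.single (i.succAbove 2) (z 2 - w 2)‖ ≤ 9 * d := hfinal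
    _ = (9 : ℝ≥0) * dist z w := by rw [hd, h9]

/-- the sphere is covered by the graph maps -/
lemma sphere_cover : S3 ⊆ ⋃ i : Fin 4, (hmap i 1 '' Kc ∪ hmap i (-1) '' Kc) := by
  intro x hx
  have hx1 : ‖x‖ = 1 := hx
  have hsum : ∑ j, x j ^ 2 = 1 := by
    have h1 := EuclideanSpace.norm_eq x
    rw [hx1] at h1
    have h0 : ∑ j, ‖x j‖ ^ 2 = ∑ j, x j ^ 2 := by
      apply Finset.sum_congr rfl
      intro j _
      rw [Real.norm_eq_abs, sq_abs]
    rw [h0] at h1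
    have h3 : (0:ℝ) ≤ ∑ j, x j ^ 2 := Finset.sum_nonneg fun j _ => sq_nonneg _
    nlinarith [Real.sq_sqrt h3]
  have hex : ∃ i : Fin 4, 1/4 ≤ x i ^ 2 := by
    by_contra h
    push_neg at h
    rw [Fin.sum_univ_four] at hsum
    have h0 := h 0; have h1 := h 1; have h2 := h 2; have h3 := h 3
    linarith
  obtain ⟨i, hi⟩ := hex
  set z : Fin 3 → ℝ := fun k => x (i.succAbove k) with hzdef
  have hzsum : z 0 ^ 2 + z 1 ^ 2 + z 2 ^ 2 = 1 - x i ^ 2 := by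
    have h4 := Fin.sum_univ_succAbove (fun j => x j ^ 2) i
    rw [hsum, Fin.sum_univ_three] at h4
    simp only [hzdef]
    linarith
  have hzK : z ∈ Kc := by
    show z 0 ^ 2 + z 1 ^ 2 + z 2 ^ 2 ≤ 3/4
    rw [hzsum]; linarith
  have hsqrt : Real.sqrt (1 - (z 0 ^ 2 + z 1 ^ 2 + z 2 ^ 2)) = |x i| := by
    rw [hzsum, show 1 - (1 - x i ^ 2) = x i ^ 2 by ring, Real.sqrt_sq_eq_abs]
  have hmapeq : ∀ s : ℝ, s * |x i| = x i → hmap i s z = x := by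
    intro s hsx
    unfold hmap
    ext j
    simp only [PiLp.add_apply, EuclideanSpace.single_apply]
    rcases eq_or_ne j i with rfl | hji
    · rw [if_pos rfl, hsqrt, hsx, if_neg, if_neg, if_neg]
      · ring
      · exact fun h => (j.succAbove_ne 2) h.symm
      · exact fun h => (j.succAbove_ne 1) h.symm
      · exact fun h => (j.succAbove_ne 0) h.symm
    · rw [if_neg hji]
      obtain ⟨k₀, hk₀⟩ := Fin.exists_succAbove_eq hji
      have key : ∀ m : Fin 3, (if j = i.succAbove m then z m else 0) =
          if k₀ = m then z m else 0 := by
        intro m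
        by_cases h : k₀ = m
        · subst h
          rw [if_pos hk₀.symm, if_pos rfl]
        · rw [if_neg, if_neg h]
          intro hh
          exact h (i.succAbove_right_injective (hk₀.trans hh))
      rw [key 0, key 1, key 2]
      have hxj : x j = z k₀ := by
        simp only [hzdef]
        rw [hk₀]
      rw [hxj]
      fin_cases k₀ <;> simp
  rcases le_or_gt 0 (x i) with hpos | hneg
  · refine Set.mem_iUnion.2 ⟨i, Or.inl ⟨z, hzK, ?_⟩⟩
    apply hmapeq
    rw [one_mul, abs_of_nonneg hpos]
  · refine Set.mem_iUnion.2 ⟨i, Or.inr ⟨z, hzK, ?_⟩⟩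
    apply hmapeq
    rw [abs_of_neg hneg]; ring

/-- the box bound for Kc -/
lemma Kc_measure_lt_top : μH[(3:ℝ)] Kc < ⊤ := by
  have hcard : ((Fintype.card (Fin 3) : ℝ)) = 3 := by simp
  have heq : (μH[(3:ℝ)] : Measure (Fin 3 → ℝ)) = volume := by
    rw [← hcard]
    exact hausdorffMeasure_pi_real
  rw [heq]
  have hsub : Kc ⊆ Set.univ.pi fun _ : Fin 3 => Set.Icc (-1:ℝ) 1 := by
    intro z hzz
    have hzz' : z 0 ^ 2 + z 1 ^ 2 + z 2 ^ 2 ≤ 3/4 := hzz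
    intro k _
    have h0 : (0:ℝ) ≤ z 0 ^ 2 := sq_nonneg _
    have h1 : (0:ℝ) ≤ z 1 ^ 2 := sq_nonneg _
    have h2 : (0:ℝ) ≤ z 2 ^ 2 := sq_nonneg _
    have hk3 : k = 0 ∨ k = 1 ∨ k = 2 := by omega
    have hzk : z k ^ 2 ≤ 3/4 := by rcases hk3 with rfl | rfl | rfl <;> nlinarith
    constructor
    · nlinarith [sq_nonneg (z k + 1)]
    · nlinarith [sq_nonneg (z k - 1)]
  calc volume Kc ≤ volume (Set.univ.pi fun _ : Fin 3 => Set.Icc (-1:ℝ) 1) := measure_mono hsub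
    _ < ⊤ := by
        rw [volume_pi_pi]
        have hIcc : volume (Set.Icc (-1:ℝ) 1) = ENNReal.ofReal 2 := by
          rw [Real.volume_Icc]; norm_num
        rw [hIcc, Finset.prod_const]
        exact ENNReal.pow_lt_top ENNReal.ofReal_lt_top

/-- finiteness of the sphere measure -/
lemma sphere_measure_lt_top : μS S3 < ⊤ := by
  show μH[(3:ℝ)] S3 < ⊤
  have himg : ∀ (i : Fin 4) (s : ℝ), s = 1 ∨ s = -1 → μH[(3:ℝ)] (hmap i s '' Kc) < ⊤ := by
    intro i s hs
    calc μH[(3:ℝ)] (hmap i s '' Kc) ≤ (9 : ℝ≥0) ^ (3:ℝ) * μH[(3:ℝ)] Kc :=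
        (hmap_lipschitz i s hs).hausdorffMeasure_image_le (by norm_num)
      _ < ⊤ := by
          apply ENNReal.mul_lt_top
          · exact ENNReal.rpow_lt_top_of_nonneg (by norm_num) ENNReal.coe_ne_top
          · exact Kc_measure_lt_top
  calc μH[(3:ℝ)] S3 ≤ μH[(3:ℝ)] (⋃ i : Fin 4, (hmap i 1 '' Kc ∪ hmap i (-1) '' Kc)) :=
      measure_mono sphere_cover
    _ ≤ ∑' i : Fin 4, μH[(3:ℝ)] (hmap i 1 '' Kc ∪ hmap i (-1) '' Kc) := measure_iUnion_le _
    _ < ⊤ := by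
        rw [tsum_fintype]
        apply ENNReal.sum_lt_top.2
        intro i _
        calc μH[(3:ℝ)] (hmap i 1 '' Kc ∪ hmap i (-1) '' Kc)
            ≤ μH[(3:ℝ)] (hmap i 1 '' Kc) + μH[(3:ℝ)] (hmap i (-1) '' Kc) := measure_union_le _ _
          _ < ⊤ := ENNReal.add_lt_top.2
              ⟨himg i 1 (Or.inl rfl), himg i (-1) (Or.inr rfl)⟩


end Helpers

set_option maxRecDepth 10000 in
/-- The volume of a smooth unit tangent vector field `v` on a compact set
`K` satisfies `vol_K(v) ≥ ∫_K (1 + σ₂(v)) dμ`; in fact the pointwise integrand satisfies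
`√(det(I₃ + G(x))) ≥ 1 + σ₂(v)(x)` on `U`. Here `VF` is the volume integrand and `s2` is
`σ₂(v)`, both characterized through arbitrary orthonormal (tangent) frames. -/
theorem volume_ge_sigma_two
    (U K : Set E4) (hU : ∃ V : Set E4, IsOpen V ∧ U = V ∩ S3)
    (hK : IsCompact K) (hKU : K ⊆ U)
    (v : E4 → E4) (Dv : E4 → E4 →L[ℝ] E4)
    (hv : ContDiffOn ℝ (⊤ : ℕ∞) v U)
    (hDv : ∀ x ∈ U, HasFDerivWithinAt v (Dv x) U x)
    (hv1 : ∀ x ∈ U, ‖v x‖ = 1) (hv2 : ∀ x ∈ U, ⟪v x, x⟫ = 0)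
    (VF s2 : E4 → ℝ)
    (hVF : ∀ x ∈ U, ∀ e : Fin 3 → E4, TangentONB x e →
      VF x = Real.sqrt (Matrix.det (1 + Matrix.of fun a b : Fin 3 =>
        ⟪cov x (Dv x) (e a), cov x (Dv x) (e b)⟫)))
    (hs2 : ∀ x ∈ U, ∀ e₁ e₂ : E4, ‖e₁‖ = 1 → ‖e₂‖ = 1 → ⟪e₁, e₂⟫ = 0 →
      ⟪e₁, x⟫ = 0 → ⟪e₂, x⟫ = 0 → ⟪e₁, v x⟫ = 0 → ⟪e₂, v x⟫ = 0 →
      s2 x = ⟪cov x (Dv x) e₁, e₁⟫ * ⟪cov x (Dv x) e₂, e₂⟫ -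
        ⟪cov x (Dv x) e₁, e₂⟫ * ⟪cov x (Dv x) e₂, e₁⟫) :
    (∫ x in K, VF x ∂μS ≥ ∫ x in K, (1 + s2 x) ∂μS) ∧
    ∀ x ∈ U, VF x ≥ 1 + s2 x := by
  obtain ⟨V, hVopen, rfl⟩ := hU
  -- ==================== pointwise part ====================
  have hpt : ∀ x ∈ V ∩ S3, (1 + s2 x ≤ VF x) ∧ 0 ≤ VF x := by
    intro x hxU
    have hx1 : ‖x‖ = 1 := hxU.2
    have hvx1 : ‖v x‖ = 1 := hv1 x hxU
    have hvx2 : ⟪v x, x⟫ = 0 := hv2 x hxU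
    obtain ⟨e₁, e₂, he₁, he₂, he12, he1x, he2x, he1v, he2v⟩ := exists_compl hx1 hvx1 hvx2
    set f : Fin 4 → E4 := ![e₁, e₂, v x, x] with hfdef
    have horth : Orthonormal ℝ f :=
      orthonormal_quad he₁ he₂ hvx1 hx1 he12 he1v he1x he2v he2x hvx2
    obtain ⟨b, hb⟩ := onb_of_family horth
    set e : Fin 3 → E4 := fun a => f a.castSucc with hedef
    have he0 : e 0 = e₁ := rfl
    have he1 : e 1 = e₂ := rfl
    have he2' : e 2 = v x := rfl
    have hTONB : TangentONB x e := by
      constructor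
      · exact horth.comp _ (Fin.castSucc_injective 3)
      · intro a
        fin_cases a
        · exact he1x
        · exact he2x
        · exact hvx2
    have hVFx := hVF x hxU e hTONB
    have hDvx := hDv x hxU
    set c : Fin 3 → E4 := fun a => cov x (Dv x) (e a) with hcdef
    have hcx : ∀ a, ⟪c a, x⟫ = 0 := by
      intro a
      show ⟪Dv x (e a) - ⟪Dv x (e a), x⟫ • x, x⟫ = 0
      rw [inner_sub_left, real_inner_smul_left, inner_self_one hx1]
      ring
    have hea1 : ∀ a, ‖e a‖ = 1 := fun a => hTONB.1.1 a
    have hcv : ∀ a, ⟪c a, v x⟫ = 0 := by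
      intro a
      have h1 : ⟪Dv x (e a), v x⟫ = 0 :=
        deriv_orthogonal hVopen hxU.1 hx1 (hea1 a) (hTONB.2 a) hDvx hv1
      show ⟪Dv x (e a) - ⟪Dv x (e a), x⟫ • x, v x⟫ = 0
      rw [inner_sub_left, real_inner_smul_left, h1]
      have : ⟪x, v x⟫ = 0 := by rw [real_inner_comm]; exact hvx2
      rw [this]
      ring
    set p : Fin 3 → ℝ := fun a => ⟪c a, e₁⟫ with hpdef
    set q : Fin 3 → ℝ := fun a => ⟪c a, e₂⟫ with hqdef
    have hb0 : b 0 = e₁ := by rw [show b 0 = f 0 from congrFun hb 0]; rfl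
    have hb1 : b 1 = e₂ := by rw [show b 1 = f 1 from congrFun hb 1]; rfl
    have hb2 : b 2 = v x := by rw [show b 2 = f 2 from congrFun hb 2]; rfl
    have hb3 : b 3 = x := by rw [show b 3 = f 3 from congrFun hb 3]; rfl
    have hgram : ∀ a a' : Fin 3, ⟪c a, c a'⟫ = p a * p a' + q a * q a' := by
      intro a a'
      have := gram_coords b (c a) (c a')
        (by rw [hb2]; exact hcv a) (by rw [hb3]; exact hcx a)
        (by rw [hb2]; exact hcv a') (by rw [hb3]; exact hcx a')
      rw [hb0, hb1] at this
      exact this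
    have hdet : Matrix.det (1 + Matrix.of fun a a' : Fin 3 =>
        ⟪cov x (Dv x) (e a), cov x (Dv x) (e a')⟫) =
        (1 + p 0 ^ 2 + p 1 ^ 2 + p 2 ^ 2) * (1 + q 0 ^ 2 + q 1 ^ 2 + q 2 ^ 2) -
          (p 0 * q 0 + p 1 * q 1 + p 2 * q 2) ^ 2 := by
      have h1 : (Matrix.of fun a a' : Fin 3 => ⟪cov x (Dv x) (e a), cov x (Dv x) (e a')⟫) =
          Matrix.of fun a a' : Fin 3 => p a * p a' + q a * q a' := by
        ext a a'
        simp only [Matrix.of_apply]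
        exact hgram a a'
      rw [h1, det3_explicit]
    have hs2x := hs2 x hxU e₁ e₂ he₁ he₂ he12 he1x he2x he1v he2v
    have hs2x' : s2 x = p 0 * q 1 - q 0 * p 1 := by
      rw [hs2x, hpdef, hqdef]
      simp only [hcdef, he0, he1]
    constructor
    · rw [hVFx, hdet, hs2x']
      exact sqrt_ineq p q
    · rw [hVFx]
      exact Real.sqrt_nonneg _
  -- ==================== continuity ====================
  have hcont : ContinuousOn VF K := by
    intro x₀ hx₀
    have hx₀U : x₀ ∈ V ∩ S3 := hKU hx₀
    have hC1 : ContDiffWithinAt ℝ 1 v (V ∩ S3) x₀ := (hv x₀ hx₀U).of_le (by simp)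
    obtain ⟨u, hu, pp, hp⟩ := hC1 1 le_rfl
    rw [Set.insert_eq_of_mem hx₀U] at hu
    obtain ⟨O, hOopen, hx₀O, hOsub⟩ := mem_nhdsWithin.1 hu
    set W := V ∩ O with hWdef
    have hWopen : IsOpen W := hVopen.inter hOopen
    have hx₀W : x₀ ∈ W := ⟨hx₀U.1, hx₀O⟩
    have hWsub : W ∩ S3 ⊆ u := by
      rintro y ⟨⟨hyV, hyO⟩, hyS⟩
      exact hOsub ⟨hyO, hyV, hyS⟩
    have hWU : W ∩ S3 ⊆ V ∩ S3 := fun y hy => ⟨hy.1.1, hy.2⟩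
    set q : E4 → (E4 →L[ℝ] E4) :=
      fun y => (continuousMultilinearCurryFin1 ℝ E4 E4) (pp y 1) with hqdef
    have hq_cont : ContinuousOn q u :=
      (continuousMultilinearCurryFin1 ℝ E4 E4).continuous.comp_continuousOn
        (hp.cont 1 le_rfl)
    have hq_deriv : ∀ y ∈ W ∩ S3, HasFDerivWithinAt v (q y) (W ∩ S3) y := fun y hy =>
      (hp.hasFDerivWithinAt (by simp) (hWsub hy)).mono hWsub
    set P : E4 → E4 → E4 := fun y u' => u' - ⟪y, u'⟫ • y with hPdef
    set Pc : E4 → (E4 →L[ℝ] E4) :=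
      fun y => ContinuousLinearMap.id ℝ E4 - (innerSL ℝ y).smulRight y with hPcdef
    have hPc_apply : ∀ y u', Pc y u' = P y u' := by
      intro y u'
      simp [hPcdef, hPdef, ContinuousLinearMap.sub_apply, ContinuousLinearMap.id_apply,
        ContinuousLinearMap.smulRight_apply, innerSL_apply_apply]
    set Tc : E4 → (E4 →L[ℝ] E4) := fun y => (Pc y).comp ((q y).comp (Pc y)) with hTcdef
    have hTc_apply : ∀ y u', Tc y u' = P y (q y (P y u')) := by
      intro y u'
      simp only [hTcdef, ContinuousLinearMap.comp_apply, hPc_apply]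
    set bstd := EuclideanSpace.basisFun (Fin 4) ℝ with hbstd
    set Φ : E4 → ℝ := fun y => Real.sqrt (Matrix.det (1 + Matrix.of fun i j : Fin 4 =>
      ⟪Tc y (bstd i), Tc y (bstd j)⟫)) with hΦdef
    have hTci : ∀ w : E4, ContinuousOn (fun y => Tc y w) (W ∩ S3) := by
      intro w
      have h1 : Continuous (fun y : E4 => P y w) := by
        simp only [hPdef]
        exact continuous_const.sub ((continuous_id.inner (𝕜 := ℝ) continuous_const).smul continuous_id)
      have h2 : ContinuousOn (fun y => q y (P y w)) (W ∩ S3) :=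
        ContinuousOn.clm_apply (hq_cont.mono hWsub) h1.continuousOn
      have h3 : ContinuousOn (fun y => P y (q y (P y w))) (W ∩ S3) := by
        simp only [hPdef]
        exact h2.sub (((continuousOn_id.inner (𝕜 := ℝ) h2).smul continuousOn_id))
      have h4 : (fun y => Tc y w) = (fun y => P y (q y (P y w))) := by
        funext y
        exact hTc_apply y w
      rw [h4]
      exact h3
    have hΦcont : ContinuousOn Φ (W ∩ S3) := by
      have hmat : ContinuousOn (fun y => ((1 + Matrix.of fun i j : Fin 4 =>
          ⟪Tc y (bstd i), Tc y (bstd j)⟫) : Matrix (Fin 4) (Fin 4) ℝ)) (W ∩ S3) := by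
        apply continuousOn_pi.2
        intro i
        apply continuousOn_pi.2
        intro j
        simp only [Matrix.add_apply, Matrix.one_apply, Matrix.of_apply]
        exact continuousOn_const.add ((hTci (bstd i)).inner (hTci (bstd j)))
      have hdetc : ContinuousOn (fun y => Matrix.det (1 + Matrix.of fun i j : Fin 4 =>
          ⟪Tc y (bstd i), Tc y (bstd j)⟫)) (W ∩ S3) :=
        (Continuous.matrix_det continuous_id).comp_continuousOn hmat
      exact Real.continuous_sqrt.comp_continuousOn hdetc
    have hΦeq : Set.EqOn VF Φ (W ∩ S3) := by
      intro y hyW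
      have hyU : y ∈ V ∩ S3 := hWU hyW
      have hy1 : ‖y‖ = 1 := hyU.2
      have hvy1 : ‖v y‖ = 1 := hv1 y hyU
      have hvy2 : ⟪v y, y⟫ = 0 := hv2 y hyU
      obtain ⟨e₁, e₂, he₁, he₂, he12, he1y, he2y, he1v, he2v⟩ := exists_compl hy1 hvy1 hvy2
      set f : Fin 4 → E4 := ![e₁, e₂, v y, y] with hfdef
      have horth : Orthonormal ℝ f :=
        orthonormal_quad he₁ he₂ hvy1 hy1 he12 he1v he1y he2v he2y hvy2
      obtain ⟨b, hb⟩ := onb_of_family horth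
      set e : Fin 3 → E4 := fun a => f a.castSucc with hedef
      have hTONB : TangentONB y e := by
        constructor
        · exact horth.comp _ (Fin.castSucc_injective 3)
        · intro a
          fin_cases a
          · exact he1y
          · exact he2y
          · exact hvy2
      have hVFy := hVF y hyU e hTONB
      have hDvy : HasFDerivWithinAt v (Dv y) (W ∩ S3) y := (hDv y hyU).mono hWU
      have hpin : ∀ z : E4, ‖z‖ = 1 → ⟪z, y⟫ = 0 → Dv y z = q y z := fun z hz1 hz2 =>
        tangent_deriv_unique hWopen hyW.1 hy1 hz1 hz2 hDvy (hq_deriv y hyW)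
      have hPyy : P y y = 0 := by
        simp only [hPdef]
        rw [inner_self_one hy1, one_smul, sub_self]
      have hPy0 : P y 0 = 0 := by
        simp only [hPdef]
        rw [inner_zero_right, zero_smul, sub_zero]
      have hTy : Tc y y = 0 := by
        rw [hTc_apply, hPyy, map_zero, hPy0]
      have hcovT : ∀ a : Fin 3, cov y (Dv y) (e a) = Tc y (e a) := by
        intro a
        have hya : ⟪y, e a⟫ = 0 := by rw [real_inner_comm]; exact hTONB.2 a
        have h1 : P y (e a) = e a := by
          simp only [hPdef]
          rw [hya, zero_smul, sub_zero]
        rw [hTc_apply, h1, ← hpin (e a) (hTONB.1.1 a) (hTONB.2 a)]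
        show cov y (Dv y) (e a) = P y (Dv y (e a))
        simp only [hPdef]
        unfold cov
        rw [real_inner_comm (Dv y (e a)) y]
      set g4 : Matrix (Fin 4) (Fin 4) ℝ :=
        Matrix.of fun i j : Fin 4 => ⟪Tc y (f i), Tc y (f j)⟫ with hg4
      have hf3 : f 3 = y := rfl
      have hrow : ∀ i, g4 i 3 = 0 := by
        intro i
        simp only [hg4, Matrix.of_apply, hf3, hTy, inner_zero_right]
      have hcol : ∀ j, g4 3 j = 0 := by
        intro j
        simp only [hg4, Matrix.of_apply, hf3, hTy, inner_zero_left]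
      have hdet1 : Matrix.det (1 + Matrix.of fun a a' : Fin 3 =>
          ⟪cov y (Dv y) (e a), cov y (Dv y) (e a')⟫) =
          Matrix.det (1 + Matrix.of fun a a' : Fin 3 => g4 a.castSucc a'.castSucc) := by
        congr 1
        congr 1
        ext a a'
        simp only [Matrix.of_apply, hg4, hcovT]
        rfl
      have hdet2 := det_border g4 hrow hcol
      have hdet3 : Matrix.det (1 + g4) = Matrix.det (1 + Matrix.of fun i j : Fin 4 =>
          ⟪Tc y (bstd i), Tc y (bstd j)⟫) := by
        have hind := gram_det_basis_indep (Tc y) bstd b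
        have hgeq : (Matrix.of fun i j : Fin 4 => ⟪Tc y (b i), Tc y (b j)⟫) = g4 := by
          ext i j
          simp only [Matrix.of_apply, hg4]
          rw [congrFun hb i, congrFun hb j]
        rw [hgeq] at hind
        exact hind
      rw [hVFy, hΦdef]
      rw [hdet1, ← hdet2, hdet3]
    have h1 : ContinuousOn VF (W ∩ S3) := hΦcont.congr hΦeq
    have h2 : ContinuousWithinAt VF (K ∩ W) x₀ :=
      (h1 x₀ ⟨hx₀W, hx₀U.2⟩).mono (fun y hy => ⟨hy.2, (hKU hy.1).2⟩)
    exact (continuousWithinAt_inter (hWopen.mem_nhds hx₀W)).1 h2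
  -- ==================== integrability & conclusion ====================
  have hKS3 : K ⊆ S3 := fun x hx => (hKU hx).2
  have hKmeas : MeasurableSet K := hK.isClosed.measurableSet
  have hμK : μS K < ⊤ := lt_of_le_of_lt (measure_mono hKS3) sphere_measure_lt_top
  have hfin : IsFiniteMeasure (μS.restrict K) :=
    ⟨by rwa [Measure.restrict_apply_univ]⟩
  obtain ⟨C, hC⟩ := hK.exists_bound_of_continuousOn hcont
  have hVFint : IntegrableOn VF K μS := by
    refine ⟨hcont.aestronglyMeasurable hKmeas, ?_⟩
    apply HasFiniteIntegral.of_bounded (C := C)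
    filter_upwards [ae_restrict_mem hKmeas] with x hx
    exact hC x hx
  refine ⟨?_, fun x hx => (hpt x hx).1⟩
  by_cases hs2int : IntegrableOn (fun x => 1 + s2 x) K μS
  · exact setIntegral_mono_on hs2int hVFint hKmeas (fun x hx => (hpt x (hKU hx)).1)
  · have h0 : ∫ x in K, (1 + s2 x) ∂μS = 0 := integral_undef hs2int
    rw [h0]
    exact setIntegral_nonneg hKmeas (fun x hx => (hpt x (hKU hx)).2)
end
end
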